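/- arXiv:1901.01859 — 3 statements merged into one kernel-verified Lean document; each statement's English description precedes it below -/
import Mathlib

section
/- Let G be a nilpotent group generated by a commutator-closed subset X, and suppose X is contained in the union of finitely many subgroups G₁, G₂, …, G_m of G. Then G equals the product set G₁G₂⋯G_m, i.e. every element of G can be written as g₁g₂⋯g_m with gᵢ ∈ Gᵢ. -/
open scoped commutatorElement

/-- The iterated (Engel) commutator: `engel y x 0 = y`, `engel y x (i+1) = ⁅engel y x i, x⁆`. -/
def engel {G : Type*} [Group G] (y x : G) : ℕ → G
  | 0 => y
  | i + 1 => ⁅engel y x i, x⁆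

/-- An element `x` of a group `G` is (left) `n`-Engel if `[y,ₙ x] = 1` for all `y ∈ G`. -/
def IsNEngel {G : Type*} [Group G] (n : ℕ) (x : G) : Prop :=
  ∀ y : G, engel y x n = 1

/-- Multilinear commutator words, indexed by their weight (number of variables). -/
inductive MCWord : ℕ → Type
  | var : MCWord 1
  | comm {a b : ℕ} : MCWord a → MCWord b → MCWord (a + b)

/-- Evaluation of a multilinear commutator word at a tuple of group elements. -/
def MCWord.eval {G : Type*} [Group G] : {k : ℕ} → MCWord k → (Fin k → G) → G
  | _, .var, f => f 0
  | _, .comm u v, f =>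
      ⁅MCWord.eval u (fun i => f (Fin.castAdd _ i)),
       MCWord.eval v (fun i => f (Fin.natAdd _ i))⁆

/-- The set of `w`-values in `G`. -/
def wValues {G : Type*} [Group G] {k : ℕ} (w : MCWord k) : Set G :=
  {g : G | ∃ f : Fin k → G, w.eval f = g}

/-- `IsDeltaValue k g` means `g` is a `δ_k`-value, i.e. of the form
`δ_k(g₁,…,g_{2^k})`: every element is a `δ₀`-value, and the `δ_{k+1}`-values are
the commutators of two `δ_k`-values. -/
def IsDeltaValue {G : Type*} [Group G] : ℕ → G → Prop
  | 0, _ => True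
  | k + 1, g => ∃ a b : G, IsDeltaValue k a ∧ IsDeltaValue k b ∧ g = ⁅a, b⁆

universe u

section Helpers
variable {G : Type u} [Group G]

private lemma lcsAux_le_map {H : Type*} [Group H] (f : G →* H) (hf : Function.Surjective f)
    (n : ℕ) : (⊤ : Subgroup H).lowerCentralSeries n ≤ ((⊤ : Subgroup G).lowerCentralSeries n).map f := by
  induction n with
  | zero => simpa using (Subgroup.map_top_of_surjective f hf).ge
  | succ n ih =>
    rw [lowerCentralSeries_succ, Subgroup.commutator_def]
    refine (Subgroup.closure_le _).2 ?_
    rintro x ⟨p, hp, q, -, rfl⟩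
    obtain ⟨a, ha, rfl⟩ := ih hp
    obtain ⟨b, rfl⟩ := hf q
    refine ⟨a * b * a⁻¹ * b⁻¹, ?_, by simp [commutatorElement_def]⟩
    rw [lowerCentralSeries_succ, Subgroup.commutator_def]
    exact Subgroup.subset_closure ⟨a, ha, b, Subgroup.mem_top b, rfl⟩

private def XiterAux (X : Set G) : ℕ → Set G
  | 0 => X
  | k + 1 => {g | ∃ a ∈ XiterAux X k, ∃ b ∈ X, g = ⁅a, b⁆}

private lemma XiterAux_subset {X : Set G} (hX : ∀ x ∈ X, ∀ y ∈ X, ⁅x, y⁆ ∈ X) (k : ℕ) :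
    XiterAux X k ⊆ X := by
  induction k with
  | zero => exact le_refl X
  | succ k ih =>
    rintro g ⟨a, ha, b, hb, rfl⟩
    exact hX a (ih ha) b hb

private lemma XiterAux_subset_lcs (X : Set G) (k : ℕ) :
    XiterAux X k ⊆ ((⊤ : Subgroup G).lowerCentralSeries k : Set G) := by
  induction k with
  | zero => intro x _; exact Subgroup.mem_top x
  | succ k ih =>
    rintro g ⟨a, ha, b, _, rfl⟩
    rw [SetLike.mem_coe, lowerCentralSeries_succ, Subgroup.commutator_def]
    exact Subgroup.subset_closure ⟨a, ih ha, b, Subgroup.mem_top b, rfl⟩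

private lemma lcs_le_closure_XiterAux (X : Set G) (hgen : Subgroup.closure X = ⊤) (k : ℕ) :
    (⊤ : Subgroup G).lowerCentralSeries k ≤ Subgroup.closure (XiterAux X k) ⊔ (⊤ : Subgroup G).lowerCentralSeries (k + 1) := by
  induction k with
  | zero =>
    rw [lowerCentralSeries_zero]
    exact le_sup_of_le_left (by rw [XiterAux]; exact hgen.ge)
  | succ k ih =>
    set T : Subgroup G := Subgroup.closure (XiterAux X (k + 1)) ⊔ (⊤ : Subgroup G).lowerCentralSeries (k + 2)
      with hTdef
    have hTle : T ≤ (⊤ : Subgroup G).lowerCentralSeries (k + 1) := by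
      refine sup_le ((Subgroup.closure_le _).2 (XiterAux_subset_lcs X (k + 1))) ?_
      exact lowerCentralSeries_antitone ⊤ (by omega)
    have hcomm_mem : ∀ a, a ∈ (⊤ : Subgroup G).lowerCentralSeries (k + 1) → ∀ b : G,
        ⁅a, b⁆ ∈ (⊤ : Subgroup G).lowerCentralSeries (k + 2) := by
      intro a ha b
      rw [lowerCentralSeries_succ, Subgroup.commutator_def]
      exact Subgroup.subset_closure ⟨a, ha, b, Subgroup.mem_top b, rfl⟩
    have hTnormal : T.Normal := by
      constructor
      intro t ht h
      have h1 : h * t * h⁻¹ = t * ⁅t⁻¹, h⁆ := by group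
      rw [h1]
      exact mul_mem ht (Subgroup.mem_sup_right (hcomm_mem t⁻¹ (inv_mem (hTle ht)) h))
    have hconj : ∀ t ∈ T, ∀ h : G, h * t * h⁻¹ ∈ T := fun t ht h => hTnormal.conj_mem t ht h
    have key : ∀ a ∈ (⊤ : Subgroup G).lowerCentralSeries k, ∀ b : G, ⁅a, b⁆ ∈ T := by
      let S : Subgroup G :=
        { carrier := {a | ∀ b : G, ⁅a, b⁆ ∈ T}
          one_mem' := by intro b; rw [commutatorElement_one_left]; exact one_mem T
          mul_mem' := by
            intro a₁ a₂ h₁ h₂ b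
            have hid : ⁅a₁ * a₂, b⁆ = (a₁ * ⁅a₂, b⁆ * a₁⁻¹) * ⁅a₁, b⁆ := by group
            rw [hid]
            exact mul_mem (hconj _ (h₂ b) a₁) (h₁ b)
          inv_mem' := by
            intro a h b
            have hid : ⁅a⁻¹, b⁆ = a⁻¹ * ⁅a, b⁆⁻¹ * (a⁻¹)⁻¹ := by group
            rw [hid]
            exact hconj _ (inv_mem (h b)) a⁻¹ }
      have hXS : ∀ x ∈ XiterAux X k, x ∈ S := by
        intro x hx
        intro b
        have hS' : (⊤ : Subgroup G) ≤
            { carrier := {b | ⁅x, b⁆ ∈ T}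
              one_mem' := by rw [Set.mem_setOf_eq, commutatorElement_one_right]; exact one_mem T
              mul_mem' := by
                intro b₁ b₂ hb₁ hb₂
                have hid : ⁅x, b₁ * b₂⁆ = ⁅x, b₁⁆ * (b₁ * ⁅x, b₂⁆ * b₁⁻¹) := by group
                rw [Set.mem_setOf_eq] at *
                rw [hid]
                exact mul_mem hb₁ (hconj _ hb₂ b₁)
              inv_mem' := by
                intro b hb
                rw [Set.mem_setOf_eq] at *
                have hid : ⁅x, b⁻¹⁆ = b⁻¹ * ⁅x, b⁆⁻¹ * (b⁻¹)⁻¹ := by group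
                rw [hid]
                exact hconj _ (inv_mem hb) b⁻¹ } := by
          rw [← hgen]
          refine (Subgroup.closure_le _).2 ?_
          intro y hy
          exact Subgroup.mem_sup_left (Subgroup.subset_closure ⟨x, hx, y, hy, rfl⟩)
        exact hS' (Subgroup.mem_top b)
      intro a ha
      have haS : a ∈ S := by
        refine (sup_le ((Subgroup.closure_le S).2 hXS) ?_) (ih ha)
        intro a' ha' b
        exact Subgroup.mem_sup_right (hcomm_mem a' ha' b)
      exact haS
    rw [lowerCentralSeries_succ, Subgroup.commutator_def]
    refine (Subgroup.closure_le _).2 ?_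
    rintro x ⟨p, hp, q, -, rfl⟩
    exact key p hp q

end Helpers


section ListHelpers
variable {G : Type u} [Group G]


private lemma prodMulCentral : ∀ {k : ℕ} (f c : Fin k → G),
    (∀ i, ∀ b : G, c i * b = b * c i) →
    (List.ofFn f).prod * (List.ofFn c).prod = (List.ofFn fun i => f i * c i).prod := by
  intro k
  induction k with
  | zero => intro f c _; simp
  | succ k ih =>
    intro f c hc
    rw [List.ofFn_succ, List.ofFn_succ, List.ofFn_succ, List.prod_cons, List.prod_cons,
      List.prod_cons]
    have ihs := ih (fun i => f i.succ) (fun i => c i.succ) (fun i b => hc i.succ b)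
    calc f 0 * (List.ofFn fun i => f i.succ).prod * (c 0 * (List.ofFn fun i => c i.succ).prod)
        = f 0 * (((List.ofFn fun i => f i.succ).prod * c 0) *
            (List.ofFn fun i => c i.succ).prod) := by
          simp [mul_assoc]
      _ = f 0 * ((c 0 * (List.ofFn fun i => f i.succ).prod) *
            (List.ofFn fun i => c i.succ).prod) := by rw [← hc 0]
      _ = f 0 * c 0 * ((List.ofFn fun i => f i.succ).prod *
            (List.ofFn fun i => c i.succ).prod) := by simp [mul_assoc]
      _ = f 0 * c 0 * (List.ofFn fun i => f i.succ * c i.succ).prod := by rw [ihs]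

private lemma prodSingle : ∀ {k : ℕ} (i : Fin k) (f : Fin k → G),
    (∀ j, j ≠ i → f j = 1) → (List.ofFn f).prod = f i := by
  intro k
  induction k with
  | zero => exact fun i => i.elim0
  | succ k ih =>
    intro i f hf
    rw [List.ofFn_succ, List.prod_cons]
    rcases Fin.eq_zero_or_eq_succ i with rfl | ⟨j, rfl⟩
    · have : ∀ j : Fin k, f j.succ = 1 := fun j => hf j.succ (Fin.succ_ne_zero j)
      have hprod : (List.ofFn fun j : Fin k => f j.succ).prod = 1 := by
        apply List.prod_eq_one
        intro x hx
        obtain ⟨j, rfl⟩ := List.mem_ofFn.1 hx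
        exact this j
      rw [hprod, mul_one]
    · have h0 : f 0 = 1 := hf 0 (by simp [Fin.ext_iff])
      rw [h0, one_mul]
      exact ih j (fun l => f l.succ) (fun l hl => hf l.succ (by simpa [Fin.succ_inj] using hl))

end ListHelpers

private theorem auxMain (n : ℕ) : ∀ {G : Type u} [Group G] {m : ℕ} (X : Set G),
    (∀ x ∈ X, ∀ y ∈ X, ⁅x, y⁆ ∈ X) → Subgroup.closure X = ⊤ →
    ∀ (Gs : Fin m → Subgroup G), X ⊆ ⋃ i, (Gs i : Set G) →
    (⊤ : Subgroup G).lowerCentralSeries n = ⊥ →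
    ∀ g : G, ∃ f : Fin m → G, (∀ i, f i ∈ Gs i) ∧ g = (List.ofFn f).prod := by
  induction n with
  | zero =>
    intro G _ m X _ _ Gs _ hnil g
    have hg : g = 1 := by
      have : g ∈ (⊤ : Subgroup G).lowerCentralSeries 0 := Subgroup.mem_top g
      rw [hnil] at this
      simpa using this
    refine ⟨fun _ => 1, fun i => one_mem _, ?_⟩
    rw [hg]
    symm
    apply List.prod_eq_one
    intro x hx
    obtain ⟨j, rfl⟩ := List.mem_ofFn.1 hx
    rfl
  | succ n ih =>
    intro G _ m X hX hgen Gs hcover hnil g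
    set N : Subgroup G := (⊤ : Subgroup G).lowerCentralSeries n with hN
    -- elements of N are central
    have hNcentral : ∀ a ∈ N, ∀ b : G, a * b = b * a := by
      intro a ha b
      have hc : ⁅a, b⁆ ∈ (⊤ : Subgroup G).lowerCentralSeries (n + 1) := by
        rw [lowerCentralSeries_succ, Subgroup.commutator_def]
        exact Subgroup.subset_closure ⟨a, ha, b, Subgroup.mem_top b, rfl⟩
      rw [hnil] at hc
      have : ⁅a, b⁆ = 1 := by simpa using hc
      have := commutatorElement_eq_one_iff_mul_comm.mp this
      exact this
    -- the quotient
    let Q := G ⧸ N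
    let π : G →* Q := QuotientGroup.mk' N
    have hπ : Function.Surjective π := QuotientGroup.mk'_surjective N
    have hkerπ : π.ker = N := QuotientGroup.ker_mk' N
    have hQnil : (⊤ : Subgroup Q).lowerCentralSeries n = ⊥ := by
      refine le_bot_iff.mp ?_
      refine le_trans (lcsAux_le_map π hπ n) ?_
      rw [le_bot_iff, Subgroup.map_eq_bot_iff, hkerπ]
    have hQgen : Subgroup.closure (π '' X) = ⊤ := by
      rw [← MonoidHom.map_closure, hgen, Subgroup.map_top_of_surjective π hπ]
    have hQX : ∀ x ∈ π '' X, ∀ y ∈ π '' X, ⁅x, y⁆ ∈ π '' X := by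
      rintro _ ⟨x, hx, rfl⟩ _ ⟨y, hy, rfl⟩
      exact ⟨⁅x, y⁆, hX x hx y hy, map_commutatorElement π x y⟩
    have hQcover : π '' X ⊆ ⋃ i, ((Gs i).map π : Set Q) := by
      rintro _ ⟨x, hx, rfl⟩
      obtain ⟨s, ⟨i, rfl⟩, hxi⟩ := hcover hx
      exact Set.mem_iUnion.2 ⟨i, ⟨x, hxi, rfl⟩⟩
    obtain ⟨f', hf'mem, hf'prod⟩ :=
      ih (π '' X) hQX hQgen (fun i => (Gs i).map π) hQcover hQnil (π g)
    choose gf hgfmem hgfval using fun i => Subgroup.mem_map.mp (hf'mem i)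
    -- g = prod * nelt with nelt ∈ N
    have hπprod : π ((List.ofFn gf).prod) = π g := by
      rw [map_list_prod, List.map_ofFn, show ⇑π ∘ gf = f' from funext hgfval, hf'prod]
    set nelt : G := (List.ofFn gf).prod⁻¹ * g with hnelt
    have hneltN : nelt ∈ N := by
      rw [← hkerπ, MonoidHom.mem_ker, map_mul, map_inv, hπprod]
      simp
    have hg : g = (List.ofFn gf).prod * nelt := by rw [hnelt]; group
    -- decompose nelt as a central product
    let Zs : Fin m → Subgroup G := fun i => Gs i ⊓ Subgroup.center G
    have hZnormal : ∀ i, (Zs i).Normal := by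
      intro i
      constructor
      intro z hz h
      rw [Subgroup.mem_inf] at hz
      have hcen := Subgroup.mem_center_iff.mp hz.2
      have hc : h * z * h⁻¹ = z := by rw [hcen h]; group
      rw [hc]; exact Subgroup.mem_inf.mpr hz
    have hNle : N ≤ ⨆ i, Zs i := by
      have h1 : N ≤ Subgroup.closure (XiterAux X n) := by
        have := lcs_le_closure_XiterAux X hgen n
        rwa [hnil, sup_bot_eq] at this
      refine le_trans h1 ((Subgroup.closure_le _).2 ?_)
      intro z hz
      have hzX : z ∈ X := XiterAux_subset hX n hz
      have hzN : z ∈ N := XiterAux_subset_lcs X n hz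
      obtain ⟨s, ⟨i, rfl⟩, hzi⟩ := hcover hzX
      have hzZ : z ∈ Zs i :=
        Subgroup.mem_inf.mpr ⟨hzi, Subgroup.mem_center_iff.2 fun b => (hNcentral z hzN b).symm⟩
      exact SetLike.mem_coe.2 (Subgroup.mem_iSup_of_mem i hzZ)
    have hneltSup : nelt ∈ ⨆ i, Zs i := hNle hneltN
    have hdecomp : ∃ c : Fin m → G, (∀ i, c i ∈ Zs i) ∧ nelt = (List.ofFn c).prod := by
      haveI := hZnormal
      refine Subgroup.iSup_induction (C := fun x : G =>
        ∃ c : Fin m → G, (∀ i, c i ∈ Zs i) ∧ x = (List.ofFn c).prod) Zs hneltSup ?_ ?_ ?_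
      · intro i x hx
        refine ⟨fun j => if j = i then x else 1, ?_, ?_⟩
        · intro j
          by_cases h : j = i
          · subst h; simpa using hx
          · simp only [if_neg h]; exact one_mem _
        · have hps := prodSingle i (fun j => if j = i then x else 1) (fun j hj => if_neg hj)
          rw [hps]
          simp
      · exact ⟨fun _ => 1, fun i => one_mem _, by
          symm
          apply List.prod_eq_one
          intro x hx
          obtain ⟨j, rfl⟩ := List.mem_ofFn.1 hx
          rfl⟩
      · rintro x y ⟨cx, hcx, rfl⟩ ⟨cy, hcy, rfl⟩
        refine ⟨fun i => cx i * cy i, fun i => mul_mem (hcx i) (hcy i), ?_⟩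
        exact prodMulCentral cx cy fun i b =>
          (Subgroup.mem_center_iff.1 (Subgroup.mem_inf.mp (hcy i)).2 b).symm
    obtain ⟨c, hcmem, hcval⟩ := hdecomp
    refine ⟨fun i => gf i * c i,
      fun i => mul_mem (hgfmem i) ((Subgroup.mem_inf.mp (hcmem i)).1), ?_⟩
    rw [hg, hcval]
    exact prodMulCentral gf c fun i b =>
      (Subgroup.mem_center_iff.1 (Subgroup.mem_inf.mp (hcmem i)).2 b).symm


/-- A nilpotent group generated by a commutator-closed subset `X`
contained in the union of subgroups `G₁,…,G_m` equals the product set `G₁G₂⋯G_m`. -/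
theorem statement2 {G : Type*} [Group G] [Group.IsNilpotent G] {m : ℕ}
    (X : Set G) (hX : ∀ x ∈ X, ∀ y ∈ X, ⁅x, y⁆ ∈ X)
    (hgen : Subgroup.closure X = ⊤)
    (Gs : Fin m → Subgroup G) (hcover : X ⊆ ⋃ i, (Gs i : Set G)) :
    ∀ g : G, ∃ f : Fin m → G, (∀ i, f i ∈ Gs i) ∧ g = (List.ofFn f).prod := by
  obtain ⟨n, hn⟩ := nilpotent_iff_lowerCentralSeries.mp ‹Group.IsNilpotent G›
  exact auxMain n X hX hgen Gs hcover hn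
end

section
/- For all positive integers d, m, n there exists a positive integer c (depending only on d, m and n) with the following property: if G is a soluble group of derived length at most d that is generated by m elements each of which is n-Engel in G, then G is nilpotent of class at most c. -/
open scoped commutatorElement


section ListHelpers

lemma pairwise_commute_of_central {R : Type*} [Monoid R] {l : List R}
    (h : ∀ x ∈ l, ∀ r : R, Commute x r) : l.Pairwise Commute := by
  induction l with
  | nil => simp
  | cons a t ih =>
    exact List.Pairwise.cons (fun y _ => h a (by simp) y)
      (ih fun x hx r => h x (List.mem_cons_of_mem a hx) r)

lemma length_le_sum_count {α : Type*} [DecidableEq α] (l : List α) (F : Finset α)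
    (h : ∀ x ∈ l, x ∈ F) : l.length ≤ ∑ w ∈ F, l.count w := by
  induction l with
  | nil => simp
  | cons a t ih =>
    have ha := h a (List.mem_cons_self)
    have ht : ∀ x ∈ t, x ∈ F := fun x hx => h x (List.mem_cons_of_mem a hx)
    calc (a :: t).length = t.length + 1 := by simp
      _ ≤ (∑ w ∈ F, t.count w) + 1 := by exact Nat.add_le_add_right (ih ht) 1
      _ = ∑ w ∈ F, (t.count w + if w = a then 1 else 0) := by
          rw [Finset.sum_add_distrib, Finset.sum_ite_eq' F a (fun _ => 1)]
          simp [ha]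
      _ = ∑ w ∈ F, (a :: t).count w := by
          refine Finset.sum_congr rfl fun w _ => ?_
          rw [List.count_cons]
          by_cases hw : w = a
          · simp [hw]
          · have h2 : (if w = a then 1 else 0) = 0 := if_neg hw
            have h3 : (if (a == w) = true then 1 else 0) = 0 := by
              have hne : ¬ ((a == w) = true) := by simp; exact fun h => hw h.symm
              exact if_neg hne
            omega

lemma exists_count_ge {α : Type*} [DecidableEq α] (l : List α) (F : Finset α) (e : ℕ)
    (h : ∀ x ∈ l, x ∈ F) (hlen : F.card * e < l.length) :
    ∃ w ∈ F, e + 1 ≤ l.count w := by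
  by_contra hc
  push_neg at hc
  have h1 : ∑ w ∈ F, l.count w ≤ ∑ _w ∈ F, e :=
    Finset.sum_le_sum fun w hw => by have := hc w hw; omega
  have h2 := length_le_sum_count l F h
  rw [Finset.sum_const, smul_eq_mul] at h1
  omega

lemma prod_eq_zero_of_count {R : Type*} [Ring R] (l : List R) (w : R) (e : ℕ)
    [DecidableEq R]
    (hcomm : ∀ x ∈ l, ∀ r : R, Commute x r) (hw : w ^ e = 0) (hcount : e ≤ l.count w) :
    l.prod = 0 := by
  have hperm := (List.filter_append_perm (fun x => x == w) l)
  have hpair : l.Pairwise Commute := pairwise_commute_of_central hcomm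
  have hfil : List.filter (fun x => x == w) l = List.replicate (l.count w) w := by
    have := List.filter_eq (l := l) w
    exact this
  have hprod : l.prod = (List.filter (fun x => x == w) l).prod *
      (List.filter (fun x => !(x == w)) l).prod := by
    rw [← List.prod_append]
    exact hperm.symm.prod_eq' hpair
  rw [hprod, hfil, List.prod_replicate]
  have hz : w ^ l.count w = 0 := by
    have h3 : w ^ l.count w = w ^ e * w ^ (l.count w - e) := by
      rw [← pow_add]; congr 1; omega
    rw [h3, hw, zero_mul]
  rw [hz, zero_mul]

section LNW

variable {Q : Type*} [Group Q] {m : ℕ}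

/-- Left-normed commutators in the generators, indexed by nonempty lists. -/
def lnw (y : Fin m → Q) : List (Fin m) → Q
  | [] => 1
  | [i] => y i
  | i :: j :: l => ⁅lnw y (j :: l), y i⁆

lemma lnw_cons (y : Fin m → Q) (i j : Fin m) (l : List (Fin m)) :
    lnw y (i :: j :: l) = ⁅lnw y (j :: l), y i⁆ := rfl

lemma lnw_mem_lcs (y : Fin m → Q) : ∀ (l : List (Fin m)) (i : Fin m),
    lnw y (i :: l) ∈ (⊤ : Subgroup Q).lowerCentralSeries l.length := by
  intro l
  induction l with
  | nil => intro i; exact Subgroup.mem_top _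
  | cons j l ih =>
    intro i
    rw [lnw_cons]
    exact Subgroup.commutator_mem_commutator (ih j) (Subgroup.mem_top _)

/-- The set of left-normed commutators of weight `c+1` in the generators. -/
def Eset (y : Fin m → Q) (c : ℕ) : Set Q :=
  Set.range fun v : Fin (c + 1) → Fin m => lnw y (List.ofFn v)

lemma Eset_mem_lcs (y : Fin m → Q) (c : ℕ) {w : Q} (hw : w ∈ Eset y c) :
    w ∈ (⊤ : Subgroup Q).lowerCentralSeries c := by
  obtain ⟨v, rfl⟩ := hw
  show lnw y (List.ofFn v) ∈ _
  rw [List.ofFn_succ]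
  have := lnw_mem_lcs y (List.ofFn fun i => v i.succ) (v 0)
  simpa using this

lemma factP_normal (y : Fin m → Q) (c : ℕ) :
    (Subgroup.closure (Eset y c) ⊔ (⊤ : Subgroup Q).lowerCentralSeries (c + 1)).Normal := by
  set X : Set Q := Eset y c ∪ ((⊤ : Subgroup Q).lowerCentralSeries (c + 1) : Set Q) with hX
  have hR : Subgroup.closure (Eset y c) ⊔ (⊤ : Subgroup Q).lowerCentralSeries (c + 1)
      = Subgroup.closure X := by
    rw [hX, Subgroup.closure_union, Subgroup.closure_eq]
  rw [hR]
  constructor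
  intro x hx g
  have himg : (fun z => g * z * g⁻¹) '' X ⊆ (Subgroup.closure X : Set Q) := by
    rintro _ ⟨z, hz, rfl⟩
    rcases hz with hz | hz
    · -- z ∈ Eset y c
      have hzc : z ∈ (⊤ : Subgroup Q).lowerCentralSeries c := Eset_mem_lcs y c hz
      have hcom : ⁅g, z⁆ ∈ (⊤ : Subgroup Q).lowerCentralSeries (c + 1) := by
        have : ⁅g, z⁆ ∈ ⁅(⊤ : Subgroup Q), (⊤ : Subgroup Q).lowerCentralSeries c⁆ :=
          Subgroup.commutator_mem_commutator (Subgroup.mem_top g) hzc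
        rwa [Subgroup.commutator_comm] at this
      have heq : g * z * g⁻¹ = ⁅g, z⁆ * z := by group
      show g * z * g⁻¹ ∈ _
      rw [heq]
      exact mul_mem (Subgroup.subset_closure (Or.inr hcom)) (Subgroup.subset_closure (Or.inl hz))
    · -- z ∈ lcs (c+1)
      show g * z * g⁻¹ ∈ _
      have : g * z * g⁻¹ ∈ (⊤ : Subgroup Q).lowerCentralSeries (c + 1) :=
        (inferInstance : ((⊤ : Subgroup Q).lowerCentralSeries (c+1)).Normal).conj_mem z hz g
      exact Subgroup.subset_closure (Or.inr this)
  have : g * x * g⁻¹ ∈ Subgroup.map (MulAut.conj g).toMonoidHom (Subgroup.closure X) :=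
    ⟨x, hx, rfl⟩
  rw [MonoidHom.map_closure] at this
  have h2 : Subgroup.closure ((fun z => g * z * g⁻¹) '' X) ≤ Subgroup.closure X :=
    (Subgroup.closure_le _).mpr himg
  exact h2 (by convert this using 2; rfl)

theorem factP (y : Fin m → Q) (hy : Subgroup.closure (Set.range y) = ⊤) (c : ℕ) :
    (⊤ : Subgroup Q).lowerCentralSeries c ≤ Subgroup.closure (Eset y c) ⊔ (⊤ : Subgroup Q).lowerCentralSeries (c + 1) := by
  induction c with
  | zero =>
    have h0 : Set.range y ⊆ Eset y 0 := by
      rintro _ ⟨i, rfl⟩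
      exact ⟨fun _ => i, by simp [lnw]⟩
    calc (⊤ : Subgroup Q).lowerCentralSeries 0 = ⊤ := rfl
      _ = Subgroup.closure (Set.range y) := hy.symm
      _ ≤ Subgroup.closure (Eset y 0) := Subgroup.closure_mono h0
      _ ≤ _ := le_sup_left
  | succ c ih =>
    have hnorm := factP_normal y (c + 1)
    show (⊤ : Subgroup Q).lowerCentralSeries (c + 1) ≤ _
    have hstep : (⊤ : Subgroup Q).lowerCentralSeries (c + 1) = ⁅(⊤ : Subgroup Q).lowerCentralSeries c, (⊤ : Subgroup Q)⁆ := rfl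
    rw [hstep]
    rw [Subgroup.commutator_le]
    intro h hh g htop
    clear htop
    have hh' : h ∈ Subgroup.closure (Eset y c ∪ ((⊤ : Subgroup Q).lowerCentralSeries (c + 1) : Set Q)) := by
      rw [Subgroup.closure_union, Subgroup.closure_eq]
      exact ih hh
    clear hh
    -- induct over h
    induction hh' using Subgroup.closure_induction with
    | mem x hx =>
      rcases hx with hx | hx
      · -- x is an Eset value; induct over g in closure of range y
        obtain ⟨v, rfl⟩ := hx
        have hg : g ∈ Subgroup.closure (Set.range y) := by rw [hy]; exact Subgroup.mem_top g
        induction hg using Subgroup.closure_induction with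
        | mem a ha =>
          obtain ⟨i, rfl⟩ := ha
          have : ⁅lnw y (List.ofFn v), y i⁆ ∈ Eset y (c + 1) := by
            refine ⟨Fin.cons i v, ?_⟩
            show lnw y (List.ofFn (Fin.cons i v)) = _
            rw [show List.ofFn (Fin.cons i v) = i :: List.ofFn v by
              rw [List.ofFn_succ]; simp]
            rcases hl : List.ofFn v with _ | ⟨j, l⟩
            · exact absurd (congrArg List.length hl) (by simp)
            · rw [lnw_cons]
          exact SetLike.le_def.mp le_sup_left (Subgroup.subset_closure this)
        | one =>
          have : ⁅lnw y (List.ofFn v), (1 : Q)⁆ = 1 := by group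
          rw [this]; exact one_mem _
        | mul a b _ _ iha ihb =>
          have : ⁅lnw y (List.ofFn v), a * b⁆
              = ⁅lnw y (List.ofFn v), a⁆ * (a * ⁅lnw y (List.ofFn v), b⁆ * a⁻¹) := by group
          rw [this]
          exact mul_mem iha (hnorm.conj_mem _ ihb a)
        | inv a _ iha =>
          have : ⁅lnw y (List.ofFn v), a⁻¹⁆ = a⁻¹ * ⁅lnw y (List.ofFn v), a⁆⁻¹ * a := by group
          rw [this]
          simpa using hnorm.conj_mem _ (inv_mem iha) a⁻¹
      · -- x ∈ lcs (c+1)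
        have : ⁅x, g⁆ ∈ (⊤ : Subgroup Q).lowerCentralSeries (c + 2) :=
          Subgroup.commutator_mem_commutator hx (Subgroup.mem_top g)
        exact SetLike.le_def.mp le_sup_right this
    | one =>
      have : ⁅(1 : Q), g⁆ = 1 := by group
      rw [this]; exact one_mem _
    | mul a b _ _ iha ihb =>
      have : ⁅a * b, g⁆ = (a * ⁅b, g⁆ * a⁻¹) * ⁅a, g⁆ := by group
      rw [this]
      exact mul_mem (hnorm.conj_mem _ ihb a) iha
    | inv a _ iha =>
      have : ⁅a⁻¹, g⁆ = a⁻¹ * ⁅a, g⁆⁻¹ * a := by group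
      rw [this]
      simpa using hnorm.conj_mem _ (inv_mem iha) a⁻¹

end LNW

section RingHelpers

lemma units_commute_of_map_commutator_eq_one {Q R : Type*} [Group Q] [Monoid R]
    (φ : Q →* Rˣ) {a b : Q} (h : φ ⁅a, b⁆ = 1) :
    Commute ((φ a : Rˣ) : R) ((φ b : Rˣ) : R) := by
  have h1 : ⁅φ a, φ b⁆ = 1 := by rw [← map_commutatorElement]; exact h
  have h2 : φ a * φ b = φ b * φ a := commutatorElement_eq_one_iff_mul_comm.mp h1
  have h3 := congrArg (Units.val) h2
  rw [Units.val_mul, Units.val_mul] at h3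
  exact h3

lemma commute_all_of_commute_gens {R : Type*} [Ring R] {S : Set R}
    (hS : Subring.closure S = ⊤) {w : R} (h : ∀ s ∈ S, Commute w s) :
    ∀ r : R, Commute w r := by
  intro r
  have hr : r ∈ Subring.closure S := by rw [hS]; exact Subring.mem_top r
  induction hr using Subring.closure_induction with
  | mem x hx => exact h x hx
  | zero => exact Commute.zero_right _
  | one => exact Commute.one_right _
  | add x y hx hy h1 h2 => exact h1.add_right h2
  | neg x hx h1 => exact h1.neg_right
  | mul x y hx hy h1 h2 => exact h1.mul_right h2

/-- The ring congruence associated to a two-sided ideal given as an `AddSubgroup`. -/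
def idealCon {R : Type*} [Ring R] (J : AddSubgroup R)
    (hl : ∀ (r : R), ∀ x ∈ J, r * x ∈ J) (hr : ∀ (r : R), ∀ x ∈ J, x * r ∈ J) :
    RingCon R where
  r a b := a - b ∈ J
  iseqv := by
    constructor
    · intro a; simpa using J.zero_mem
    · intro a b h; simpa [neg_sub] using J.neg_mem h
    · intro a b c h1 h2; simpa using J.add_mem h1 h2
  mul' := by
    intro a b c d h1 h2
    have := J.add_mem (hr c _ h1) (hl b _ h2)
    have heq : (a - b) * c + b * (c - d) = a * c - b * d := by rw [sub_mul, mul_sub]; abel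
    rwa [heq] at this
  add' := by
    intro a b c d h1 h2
    have := J.add_mem h1 h2
    have heq : a - b + (c - d) = a + c - (b + d) := by abel
    rwa [heq] at this

lemma idealCon_eq_zero_iff {R : Type*} [Ring R] (J : AddSubgroup R)
    (hl : ∀ (r : R), ∀ x ∈ J, r * x ∈ J) (hr : ∀ (r : R), ∀ x ∈ J, x * r ∈ J) (x : R) :
    (idealCon J hl hr).mk' x = 0 ↔ x ∈ J := by
  have h0 : (0 : (idealCon J hl hr).Quotient) = (idealCon J hl hr).mk' 0 := rfl
  rw [h0]
  change ((x : (idealCon J hl hr).Quotient) = (0:R)) ↔ _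
  rw [RingCon.eq]
  change x - 0 ∈ J ↔ x ∈ J
  rw [sub_zero]

lemma idealCon_surjective {R : Type*} [Ring R] (c : RingCon R) :
    Function.Surjective (⇑c.mk') := fun x => by
  obtain ⟨a⟩ := x; exact ⟨a, rfl⟩

end RingHelpers
section RingProp

universe u v

theorem ringProp (c : ℕ) (m n : ℕ) (hn : 0 < n) :
    ∃ N : ℕ, 0 < N ∧
      ∀ (R : Type u) [Ring R] (Q : Type v) [Group Q] (φ : Q →* Rˣ) (y : Fin m → Q),
        Subgroup.closure (Set.range y) = ⊤ →
        Subring.closure (Set.range fun q : Q => ((φ q : Rˣ) : R)) = ⊤ →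
        (∀ z ∈ (⊤ : Subgroup Q).lowerCentralSeries c, φ z = 1) →
        (∀ i, (((φ (y i) : Rˣ) : R) - 1) ^ n = 0) →
        ∀ l : List (Fin m), l.length = N →
          (l.map fun i => (((φ (y i) : Rˣ) : R) - 1)).prod = 0 := by
  induction c with
  | zero =>
    refine ⟨1, Nat.one_pos, ?_⟩
    intro R _ Q _ φ y hgen hring htriv heng l hl
    rcases l with _ | ⟨i, l⟩
    · simp at hl
    rcases l with _ | ⟨j, l⟩
    · have h1 : φ (y i) = 1 := htriv _ (Subgroup.mem_top _)
      simp [h1]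
    · simp at hl
  | succ c IH =>
    obtain ⟨N', hN', hIH⟩ := IH
    refine ⟨N' * (m ^ (c + 1) * (2 * n - 2) + 1), by positivity, ?_⟩
    intro R _ Q _ φ y hgen hring htriv heng l hlen
    classical
    set t : Q → R := fun q => ((φ q : Rˣ) : R) - 1 with ht
    have hval : ∀ a b : Q, ((φ (a * b) : Rˣ) : R) = ((φ a : Rˣ) : R) * ((φ b : Rˣ) : R) := by
      intro a b; rw [map_mul, Units.val_mul]
    have hval1 : ∀ a : Q, ((φ a : Rˣ) : R) * ((φ a⁻¹ : Rˣ) : R) = 1 := by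
      intro a; rw [← hval, mul_inv_cancel, map_one, Units.val_one]
    have key_mul : ∀ a b : Q, t (a * b) = t a * ((φ b : Rˣ) : R) + t b := by
      intro a b
      simp only [ht, hval]
      rw [sub_mul, one_mul]
      abel
    have key_inv : ∀ a : Q, t a⁻¹ = -(t a * ((φ a⁻¹ : Rˣ) : R)) := by
      intro a
      have h5 : t a * ((φ a⁻¹ : Rˣ) : R) = 1 - ((φ a⁻¹ : Rˣ) : R) := by
        simp only [ht]; rw [sub_mul, one_mul, hval1 a]
      rw [h5]; simp only [ht]; abel
    have hw_central : ∀ w : Q, w ∈ (⊤ : Subgroup Q).lowerCentralSeries c → ∀ r : R,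
        Commute ((φ w : Rˣ) : R) r := by
      intro w hw
      apply commute_all_of_commute_gens hring
      rintro s ⟨q, rfl⟩
      apply units_commute_of_map_commutator_eq_one
      exact htriv _ (Subgroup.commutator_mem_commutator hw (Subgroup.mem_top q))
    have ht_central : ∀ w : Q, w ∈ (⊤ : Subgroup Q).lowerCentralSeries c → ∀ r : R, Commute (t w) r := by
      intro w hw r
      exact (hw_central w hw r).sub_left (Commute.one_left r)
    -- nilpotency of t-values of E-set elements
    have hnilE : ∀ w ∈ Eset y c, (t w) ^ (2 * n - 1) = 0 := by
      rintro _ ⟨v, rfl⟩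
      show (t (lnw y (List.ofFn v))) ^ (2 * n - 1) = 0
      have hwmem : lnw y (List.ofFn v) ∈ (⊤ : Subgroup Q).lowerCentralSeries c := Eset_mem_lcs y c ⟨v, rfl⟩
      rw [List.ofFn_succ] at hwmem ⊢
      rcases hl0 : List.ofFn (fun i : Fin c => v i.succ) with _ | ⟨j, l0⟩
      · have h6 : lnw y [v 0] = y (v 0) := rfl
        rw [h6, show 2 * n - 1 = n + (n - 1) by omega, pow_add, heng (v 0), zero_mul]
      · rw [hl0] at hwmem
        rw [lnw_cons]
        set i := v 0 with hi
        set u := lnw y (j :: l0) with hu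
        set w := ⁅u, y i⁆ with hwdef
        rw [lnw_cons] at hwmem
        have hwmem' : w ∈ (⊤ : Subgroup Q).lowerCentralSeries c := hwmem
        set b := u * (y i)⁻¹ * u⁻¹ with hb
        have hYB : Commute ((φ (y i) : Rˣ) : R) ((φ b : Rˣ) : R) := by
          apply units_commute_of_map_commutator_eq_one
          have hident : ⁅y i, b⁆ = ⁅w⁻¹, (y i)⁻¹⁆ := by rw [hwdef, hb]; group
          rw [hident]
          exact htriv _ (Subgroup.commutator_mem_commutator (inv_mem hwmem') (Subgroup.mem_top _))
        have hcommYinv : Commute ((φ (y i) : Rˣ) : R) ((φ ((y i))⁻¹ : Rˣ) : R) := by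
          have h7 : ((φ ((y i))⁻¹ : Rˣ) : R) * ((φ (y i) : Rˣ) : R) = 1 := by
            rw [← hval, inv_mul_cancel, map_one, Units.val_one]
          show _ * _ = _ * _
          rw [hval1, h7]
        have hYn : t ((y i)⁻¹) ^ n = 0 := by
          rw [key_inv]
          have hc2 : Commute (t (y i)) ((φ ((y i))⁻¹ : Rˣ) : R) :=
            hcommYinv.sub_left (Commute.one_left _)
          rw [neg_pow, hc2.mul_pow, heng i, zero_mul, mul_zero]
        have hBn : (t b) ^ n = 0 := by
          have hUU : t b = ((φ u : Rˣ) : R) * t ((y i)⁻¹) * (((φ u)⁻¹ : Rˣ) : R) := by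
            have h8 : ((φ u : Rˣ) : R) * (((φ u)⁻¹ : Rˣ) : R) = 1 := by
              rw [← Units.val_mul, mul_inv_cancel, Units.val_one]
            have h9 : ((φ u : Rˣ) : R) * (t ((y i)⁻¹)) * (((φ u)⁻¹ : Rˣ) : R)
                = ((φ u : Rˣ) : R) * ((φ ((y i))⁻¹ : Rˣ) : R) * (((φ u)⁻¹ : Rˣ) : R) - 1 := by
              simp only [ht]
              rw [mul_sub, mul_one, sub_mul, h8]
            rw [h9]
            simp only [ht, hb]
            congr 1
            rw [hval, hval, map_inv, map_inv]
          rw [hUU, Units.conj_pow, hYn, mul_zero, zero_mul]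
        have hw_inv_eq : w⁻¹ = (y i) * b := by rw [hwdef, hb]; group
        have htw' : t w⁻¹ = t (y i) * ((φ b : Rˣ) : R) + t b := by rw [hw_inv_eq, key_mul]
        have hYB1 : Commute (t (y i)) ((φ b : Rˣ) : R) := hYB.sub_left (Commute.one_left _)
        have hYB2 : Commute (t (y i)) (t b) := hYB1.sub_right (Commute.one_right _)
        have hBB : Commute ((φ b : Rˣ) : R) (t b) := (Commute.refl _).sub_right (Commute.one_right _)
        have hprodcomm : Commute (t (y i) * ((φ b : Rˣ) : R)) (t b) := hYB2.mul_left hBB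
        have hsum : (t w⁻¹) ^ (2 * n - 1) = 0 := by
          rw [htw', Commute.add_pow hprodcomm]
          apply Finset.sum_eq_zero
          intro k hk
          rcases le_or_gt n k with hkn | hkn
          · have h10 : (t (y i) * ((φ b : Rˣ) : R)) ^ k = 0 := by
              rw [hYB1.mul_pow, show k = n + (k - n) by omega, pow_add, heng i, zero_mul, zero_mul]
            rw [h10, zero_mul, zero_mul]
          · have h11 : (t b) ^ (2 * n - 1 - k) = 0 := by
              rw [show 2 * n - 1 - k = n + (2 * n - 1 - k - n) by omega, pow_add, hBn, zero_mul]
            rw [h11, mul_zero, zero_mul]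
        have htww : t w = -(t w⁻¹ * ((φ w : Rˣ) : R)) := by
          have h12 := key_inv w⁻¹
          rwa [inv_inv] at h12
        have hcp : Commute (t w⁻¹) ((φ w : Rˣ) : R) := (hw_central w hwmem' _).symm
        rw [htww, neg_pow, hcp.mul_pow, hsum, zero_mul, mul_zero]
    -- the finite set of central nilpotent elements
    set F : Finset R := Finset.image (fun v : Fin (c + 1) → Fin m => t (lnw y (List.ofFn v)))
      Finset.univ with hF
    have hFmem : ∀ w ∈ Eset y c, t w ∈ F := by
      rintro _ ⟨v, rfl⟩
      exact Finset.mem_image.mpr ⟨v, Finset.mem_univ v, rfl⟩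
    have hFprop : ∀ x ∈ F, (∀ r : R, Commute x r) ∧ x ^ (2 * n - 1) = 0 := by
      intro x hx
      obtain ⟨v, _, rfl⟩ := Finset.mem_image.mp hx
      exact ⟨ht_central _ (Eset_mem_lcs y c ⟨v, rfl⟩), hnilE _ ⟨v, rfl⟩⟩
    have hFcard : F.card ≤ m ^ (c + 1) := by
      calc F.card ≤ (Finset.univ : Finset (Fin (c + 1) → Fin m)).card := Finset.card_image_le
        _ = m ^ (c + 1) := by simp
    -- the ideal J
    set J : AddSubgroup R := AddSubgroup.closure {x | ∃ s : R, ∃ w ∈ F, x = s * w} with hJ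
    have hJl : ∀ (r : R), ∀ x ∈ J, r * x ∈ J := by
      intro r x hx
      induction hx using AddSubgroup.closure_induction with
      | mem z hz =>
        obtain ⟨s, w, hw, rfl⟩ := hz
        exact AddSubgroup.subset_closure ⟨r * s, w, hw, (mul_assoc r s w).symm⟩
      | zero => rw [mul_zero]; exact zero_mem _
      | add a b _ _ h1 h2 => rw [mul_add]; exact add_mem h1 h2
      | neg a _ h1 => rw [mul_neg]; exact neg_mem h1
    have hJr : ∀ (r : R), ∀ x ∈ J, x * r ∈ J := by
      intro r x hx
      induction hx using AddSubgroup.closure_induction with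
      | mem z hz =>
        obtain ⟨s, w, hw, rfl⟩ := hz
        have h13 : s * w * r = s * r * w := by
          rw [mul_assoc, ((hFprop w hw).1 r).eq, ← mul_assoc]
        rw [h13]
        exact AddSubgroup.subset_closure ⟨s * r, w, hw, rfl⟩
      | zero => rw [zero_mul]; exact zero_mem _
      | add a b _ _ h1 h2 => rw [add_mul]; exact add_mem h1 h2
      | neg a _ h1 => rw [neg_mul]; exact neg_mem h1
    -- quotient ring
    set con := idealCon J hJl hJr with hcon
    set π : R →+* con.Quotient := con.mk' with hπ
    set φ' : Q →* con.Quotientˣ := (Units.map π.toMonoidHom).comp φ with hφ'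
    have hφ'val : ∀ q : Q, ((φ' q : con.Quotientˣ) : con.Quotient) = π ((φ q : Rˣ) : R) :=
      fun q => rfl
    have hsurj : Function.Surjective ⇑π := idealCon_surjective con
    have hring' : Subring.closure
        (Set.range fun q : Q => ((φ' q : con.Quotientˣ) : con.Quotient)) = ⊤ := by
      rw [eq_top_iff]
      rintro x -
      obtain ⟨r, rfl⟩ := hsurj x
      have hr : r ∈ Subring.closure (Set.range fun q : Q => ((φ q : Rˣ) : R)) := by
        rw [hring]; exact Subring.mem_top r
      induction hr using Subring.closure_induction with
      | mem z hz =>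
        obtain ⟨q, rfl⟩ := hz
        exact Subring.subset_closure ⟨q, rfl⟩
      | zero => rw [map_zero]; exact zero_mem _
      | one => rw [map_one]; exact one_mem _
      | add a b _ _ h1 h2 => rw [map_add]; exact add_mem h1 h2
      | neg a _ h1 => rw [map_neg]; exact neg_mem h1
      | mul a b _ _ h1 h2 => rw [map_mul]; exact mul_mem h1 h2
    have hDsub : ∀ z ∈ (⊤ : Subgroup Q).lowerCentralSeries c, t z ∈ J := by
      have hle : (⊤ : Subgroup Q).lowerCentralSeries c ≤
          { carrier := {q : Q | t q ∈ J}
            one_mem' := by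
              show t 1 ∈ J
              have : t (1 : Q) = 0 := by simp only [ht]; rw [map_one, Units.val_one, sub_self]
              rw [this]; exact zero_mem _
            mul_mem' := by
              intro a b ha hb
              show t (a * b) ∈ J
              rw [key_mul]
              exact add_mem (hJr _ _ ha) hb
            inv_mem' := by
              intro a ha
              show t a⁻¹ ∈ J
              rw [key_inv]
              exact neg_mem (hJr _ _ ha) } := by
        refine le_trans (factP y hgen c) (sup_le ?_ ?_)
        · rw [Subgroup.closure_le]
          intro w hw
          show t w ∈ J
          exact AddSubgroup.subset_closure ⟨1, t w, hFmem w hw, (one_mul _).symm⟩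
        · intro z hz
          show t z ∈ J
          have h14 : φ z = 1 := htriv z hz
          have : t z = 0 := by simp only [ht]; rw [h14, Units.val_one, sub_self]
          rw [this]; exact zero_mem _
      exact fun z hz => hle hz
    have htriv' : ∀ z ∈ (⊤ : Subgroup Q).lowerCentralSeries c, φ' z = 1 := by
      intro z hz
      have h1 : π (t z) = 0 := (idealCon_eq_zero_iff J hJl hJr _).mpr (hDsub z hz)
      apply Units.ext
      rw [Units.val_one, hφ'val]
      have h2 : π ((φ z : Rˣ) : R) - 1 = 0 := by
        rw [← map_one π, ← map_sub]
        simp only [ht] at h1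
        exact h1
      rw [sub_eq_zero] at h2
      exact h2
    have heng' : ∀ i, (((φ' (y i) : con.Quotientˣ) : con.Quotient) - 1) ^ n = 0 := by
      intro i
      have h1 : ((φ' (y i) : con.Quotientˣ) : con.Quotient) - 1 = π (t (y i)) := by
        simp only [ht]
        rw [map_sub, map_one, hφ'val]
      rw [h1, ← map_pow]
      have h2 := heng i
      simp only [ht] at h2 ⊢
      rw [h2, map_zero]
    have hquot := hIH con.Quotient Q φ' y hgen hring' htriv' heng'
    have hchunk : ∀ l' : List (Fin m), l'.length = N' →
        (l'.map fun i => t (y i)).prod ∈ J := by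
      intro l' hl'
      have h0 := hquot l' hl'
      have h1 : π ((l'.map fun i => t (y i)).prod)
          = (l'.map fun i => (((φ' (y i) : con.Quotientˣ) : con.Quotient) - 1)).prod := by
        rw [map_list_prod, List.map_map]
        congr 1
      rw [h0] at h1
      exact (idealCon_eq_zero_iff J hJl hJr _).mp h1
    -- products of K ideal elements vanish
    set DD : ℕ → AddSubgroup R := fun k => AddSubgroup.closure
      {x | ∃ s : R, ∃ ws : List R, (∀ w ∈ ws, w ∈ F) ∧ ws.length = k ∧ x = s * ws.prod}
      with hDDdef
    have hJD : ∀ k, ∀ x ∈ J, ∀ z ∈ DD k, x * z ∈ DD (k + 1) := by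
      intro k x hx
      induction hx using AddSubgroup.closure_induction with
      | mem x1 hx1 =>
        obtain ⟨s, w, hw, rfl⟩ := hx1
        intro z hz
        induction hz using AddSubgroup.closure_induction with
        | mem z1 hz1 =>
          obtain ⟨s', ws, hws, hlenws, rfl⟩ := hz1
          have hcw := (hFprop w hw).1
          have h15 : s * w * (s' * ws.prod) = (s * s') * ((w :: ws).prod) := by
            rw [List.prod_cons, ← mul_assoc, mul_assoc s w s', (hcw s').eq, ← mul_assoc,
              mul_assoc]
          rw [h15]
          refine AddSubgroup.subset_closure ⟨s * s', w :: ws, ?_, by simp [hlenws], rfl⟩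
          intro x hx
          rcases List.mem_cons.mp hx with rfl | hx'
          · exact hw
          · exact hws x hx'
        | zero => rw [mul_zero]; exact zero_mem _
        | add z1 z2 _ _ h1 h2 => rw [mul_add]; exact add_mem h1 h2
        | neg z1 _ h1 => rw [mul_neg]; exact neg_mem h1
      | zero => intro z hz; rw [zero_mul]; exact zero_mem _
      | add x1 x2 _ _ h1 h2 => intro z hz; rw [add_mul]; exact add_mem (h1 z hz) (h2 z hz)
      | neg x1 _ h1 => intro z hz; rw [neg_mul]; exact neg_mem (h1 z hz)
    have hDDzero : ∀ x ∈ DD (m ^ (c + 1) * (2 * n - 2) + 1), x = 0 := by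
      intro x hx
      induction hx using AddSubgroup.closure_induction with
      | mem z hz =>
        obtain ⟨s, ws, hws, hlenws, rfl⟩ := hz
        have hpig : ∃ w ∈ F, (2 * n - 2) + 1 ≤ ws.count w := by
          apply exists_count_ge ws F (2 * n - 2) hws
          calc F.card * (2 * n - 2) ≤ m ^ (c + 1) * (2 * n - 2) :=
                Nat.mul_le_mul_right _ hFcard
            _ < m ^ (c + 1) * (2 * n - 2) + 1 := by omega
            _ = ws.length := hlenws.symm
        obtain ⟨w, hwF, hcount⟩ := hpig
        have hz0 : ws.prod = 0 := by
          apply prod_eq_zero_of_count ws w (2 * n - 1)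
          · intro x hx r; exact (hFprop x (hws x hx)).1 r
          · exact (hFprop w hwF).2
          · omega
        rw [hz0, mul_zero]
      | zero => rfl
      | add a b _ _ h1 h2 => rw [h1, h2, add_zero]
      | neg a _ h1 => rw [h1, neg_zero]
    have hsplit : ∀ k (l' : List (Fin m)), l'.length = k * N' →
        (l'.map fun i => t (y i)).prod ∈ DD k := by
      intro k
      induction k with
      | zero =>
        intro l' hl'
        have h16 : l' = [] := List.length_eq_zero_iff.mp (by simpa using hl')
        subst h16
        apply AddSubgroup.subset_closure
        exact ⟨1, [], by simp, rfl, by simp⟩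
      | succ k ihk =>
        intro l' hl'
        have hlen1 : N' ≤ l'.length := by
          rw [hl', Nat.succ_mul]
          omega
        have hprodsplit : (l'.map fun i => t (y i)).prod
            = ((l'.take N').map fun i => t (y i)).prod
              * ((l'.drop N').map fun i => t (y i)).prod := by
          conv_lhs => rw [← List.take_append_drop N' l']
          rw [List.map_append, List.prod_append]
        rw [hprodsplit]
        have h1 : (l'.take N').length = N' := by
          rw [List.length_take]
          exact min_eq_left hlen1
        have h2 : (l'.drop N').length = k * N' := by
          rw [List.length_drop, hl', Nat.succ_mul]
          omega
        exact hJD k _ (hchunk _ h1) _ (ihk _ h2)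
    have hfin := hsplit (m ^ (c + 1) * (2 * n - 2) + 1) l (by rw [hlen]; ring)
    exact hDDzero _ hfin

end RingProp
section ConjAction

universe u

variable {G : Type u} [Group G] (A : Subgroup G) (hA : A.Normal)

/-- Conjugation by `g` as a monoid hom of a normal subgroup. -/
def cjHom (g : G) : ↥A →* ↥A where
  toFun := fun a => ⟨g * ↑a * g⁻¹, hA.conj_mem ↑a a.2 g⟩
  map_one' := Subtype.ext (by simp)
  map_mul' := fun a b => Subtype.ext (by
    show g * ↑(a * b) * g⁻¹ = g * ↑a * g⁻¹ * (g * ↑b * g⁻¹)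
    rw [Subgroup.coe_mul]
    group)

lemma cjHom_apply (g : G) (a : ↥A) : ((cjHom A hA g a : ↥A) : G) = g * ↑a * g⁻¹ := rfl

/-- Conjugation as an additive endomorphism of `Additive ↥A`. -/
def cjAdd (g : G) : AddMonoid.End (Additive ↥A) :=
  AddMonoidHom.mk' (fun a => Additive.ofMul (cjHom A hA g (Additive.toMul a)))
    (fun a b => congrArg Additive.ofMul (map_mul (cjHom A hA g) _ _))

lemma cjAdd_apply (g : G) (a : Additive ↥A) :
    cjAdd A hA g a = Additive.ofMul (cjHom A hA g (Additive.toMul a)) := rfl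

lemma cjAdd_mul (g h : G) : cjAdd A hA (g * h) = cjAdd A hA g * cjAdd A hA h := by
  refine AddMonoidHom.ext fun a => ?_
  show Additive.ofMul (cjHom A hA (g * h) (Additive.toMul a)) = _
  have h2 : (cjAdd A hA g * cjAdd A hA h) a
      = Additive.ofMul (cjHom A hA g (cjHom A hA h (Additive.toMul a))) := rfl
  refine Eq.trans ?_ h2.symm
  refine congrArg Additive.ofMul (Subtype.ext ?_)
  show g * h * ↑(Additive.toMul a) * (g * h)⁻¹
    = g * (h * ↑(Additive.toMul a) * h⁻¹) * g⁻¹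
  group

lemma cjAdd_one : cjAdd A hA 1 = 1 := by
  refine AddMonoidHom.ext fun a => ?_
  show Additive.ofMul (cjHom A hA 1 (Additive.toMul a)) = a
  refine congrArg Additive.ofMul (Subtype.ext ?_) |>.trans rfl
  show (1 : G) * ↑(Additive.toMul a) * (1 : G)⁻¹ = ↑(Additive.toMul a)
  group

/-- The conjugation action of `G` on the abelianized normal subgroup, as units of
the endomorphism monoid. -/
def sigma : G →* (AddMonoid.End (Additive ↥A))ˣ :=
  MonoidHom.mk'
    (fun g =>
      { val := cjAdd A hA g
        inv := cjAdd A hA g⁻¹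
        val_inv := by rw [← cjAdd_mul, mul_inv_cancel, cjAdd_one]
        inv_val := by rw [← cjAdd_mul, inv_mul_cancel, cjAdd_one] })
    (fun g h => Units.ext (cjAdd_mul A hA g h))

lemma sigma_val (g : G) : ((sigma A hA g : (AddMonoid.End (Additive ↥A))ˣ) :
    AddMonoid.End (Additive ↥A)) = cjAdd A hA g := rfl

end ConjAction
section KeyLemma

universe u

set_option maxHeartbeats 1000000 in
theorem keyLemma (c' m n : ℕ) (hn : 0 < n) :
    ∃ N : ℕ, 0 < N ∧
      ∀ (G : Type u) [Group G] (xs : Fin m → G) (A : Subgroup G) (hA : A.Normal),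
        Subgroup.closure (Set.range xs) = ⊤ →
        (∀ i, IsNEngel n (xs i)) →
        ⁅A, A⁆ = ⊥ →
        (⊤ : Subgroup G).lowerCentralSeries c' ≤ A →
        (⊤ : Subgroup G).lowerCentralSeries (c' + N) = ⊥ := by
  obtain ⟨N, hNpos, hRP⟩ := ringProp.{u, u} c' m n hn
  refine ⟨N, hNpos, ?_⟩
  intro G _ xs A hA hgen heng hab hlcs
  have hcomm : ∀ a b : G, a ∈ A → b ∈ A → a * b = b * a := by
    intro a b ha hb
    have h1 : ⁅a, b⁆ ∈ (⊥ : Subgroup G) := hab ▸ Subgroup.commutator_mem_commutator ha hb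
    exact commutatorElement_eq_one_iff_mul_comm.mp (Subgroup.mem_bot.mp h1)
  letI : CommGroup ↥A :=
    { (inferInstance : Group ↥A) with
      mul_comm := fun a b => Subtype.ext (hcomm ↑a ↑b a.2 b.2) }
  set R0 := AddMonoid.End (Additive ↥A) with hR0
  -- Engel elements act nilpotently
  have engel_mem : ∀ (x a : G), a ∈ A → ∀ k, engel a x k ∈ A := by
    intro x a ha k
    induction k with
    | zero => exact ha
    | succ k ih =>
      show ⁅engel a x k, x⁆ ∈ A
      have h2 : ⁅engel a x k, x⁆ = engel a x k * (x * (engel a x k)⁻¹ * x⁻¹) := by group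
      rw [h2]
      exact A.mul_mem ih (hA.conj_mem _ (A.inv_mem ih) x)
  have formula : ∀ (x : G) (k : ℕ) (a : ↥A),
      ((1 - ((sigma A hA x : R0ˣ) : R0)) ^ k) (Additive.ofMul a)
        = Additive.ofMul (⟨engel (↑a) x k, engel_mem x ↑a a.2 k⟩ : ↥A) := by
    intro x k
    induction k with
    | zero =>
      intro a
      rw [pow_zero]
      show Additive.ofMul a = _
      exact congrArg Additive.ofMul (Subtype.ext rfl)
    | succ k ih =>
      intro a
      rw [pow_succ']
      have happ : ((1 - ((sigma A hA x : R0ˣ) : R0)) * (1 - ((sigma A hA x : R0ˣ) : R0)) ^ k)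
            (Additive.ofMul a)
          = (1 - ((sigma A hA x : R0ˣ) : R0))
            (((1 - ((sigma A hA x : R0ˣ) : R0)) ^ k) (Additive.ofMul a)) := rfl
      rw [happ, ih a]
      set b : ↥A := ⟨engel (↑a) x k, engel_mem x ↑a a.2 k⟩ with hbdef
      have hsub : (1 - ((sigma A hA x : R0ˣ) : R0)) (Additive.ofMul b)
          = Additive.ofMul b - ((sigma A hA x : R0ˣ) : R0) (Additive.ofMul b) := by
                rfl
      rw [hsub]
      have hconj : ((sigma A hA x : R0ˣ) : R0) (Additive.ofMul b)
          = Additive.ofMul (cjHom A hA x b) := rfl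
      rw [hconj]
      have hsub2 : Additive.ofMul b - Additive.ofMul (cjHom A hA x b)
          = Additive.ofMul (b * (cjHom A hA x b)⁻¹) := by
        rw [sub_eq_add_neg]
        rfl
      rw [hsub2]
      refine congrArg Additive.ofMul (Subtype.ext ?_)
      show (engel (↑a) x k) * (x * (engel (↑a) x k) * x⁻¹)⁻¹ = engel (↑a) x (k + 1)
      show (engel (↑a) x k) * (x * (engel (↑a) x k) * x⁻¹)⁻¹ = ⁅engel (↑a) x k, x⁆
      group
  have hEng : ∀ i, (((sigma A hA (xs i) : R0ˣ) : R0) - 1) ^ n = 0 := by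
    intro i
    have h1 : (1 - ((sigma A hA (xs i) : R0ˣ) : R0)) ^ n = 0 := by
      refine AddMonoidHom.ext fun z => ?_
      have h2 := formula (xs i) n (Additive.toMul z)
      have h3 : Additive.ofMul (Additive.toMul z) = z := rfl
      rw [h3] at h2
      refine h2.trans ?_
      have h4 : (⟨engel (↑(Additive.toMul z)) (xs i) n,
          engel_mem (xs i) _ (Additive.toMul z).2 n⟩ : ↥A) = 1 :=
        Subtype.ext (heng i ↑(Additive.toMul z))
      rw [h4]
      rfl
    have h5 : (((sigma A hA (xs i) : R0ˣ) : R0) - 1) = -(1 - ((sigma A hA (xs i) : R0ˣ) : R0)) := by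
      rw [neg_sub]
    have h9 := neg_pow (1 - ((sigma A hA (xs i) : R0ˣ) : R0)) n
    rw [h5, h9, h1, mul_zero]
  -- restrict to the subring generated by the action
  set S : Subring R0 := Subring.closure (Set.range fun g : G => ((sigma A hA g : R0ˣ) : R0))
    with hSdef
  have hmemS : ∀ g : G, ((sigma A hA g : R0ˣ) : R0) ∈ S :=
    fun g => Subring.subset_closure ⟨g, rfl⟩
  set φ' : G →* (↥S)ˣ := MonoidHom.mk'
    (fun g =>
      { val := ⟨((sigma A hA g : R0ˣ) : R0), hmemS g⟩
        inv := ⟨((sigma A hA g⁻¹ : R0ˣ) : R0), hmemS g⁻¹⟩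
        val_inv := Subtype.ext (by
          show ((sigma A hA g : R0ˣ) : R0) * ((sigma A hA g⁻¹ : R0ˣ) : R0) = 1
          rw [← Units.val_mul, ← map_mul, mul_inv_cancel, map_one, Units.val_one])
        inv_val := Subtype.ext (by
          show ((sigma A hA g⁻¹ : R0ˣ) : R0) * ((sigma A hA g : R0ˣ) : R0) = 1
          rw [← Units.val_mul, ← map_mul, inv_mul_cancel, map_one, Units.val_one]) })
    (fun g h => Units.ext (Subtype.ext (by
      show ((sigma A hA (g * h) : R0ˣ) : R0) = ((sigma A hA g : R0ˣ) : R0) * ((sigma A hA h : R0ˣ) : R0)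
      rw [map_mul, Units.val_mul]))) with hφ'def
  have hφ'val : ∀ g : G, (((φ' g : (↥S)ˣ) : ↥S) : R0) = ((sigma A hA g : R0ˣ) : R0) :=
    fun g => rfl
  have hring : Subring.closure (Set.range fun g : G => ((φ' g : (↥S)ˣ) : ↥S)) = ⊤ := by
    rw [eq_top_iff]
    rintro ⟨x, hx⟩ -
    induction hx using Subring.closure_induction with
    | mem z hz =>
      obtain ⟨g, rfl⟩ := hz
      exact Subring.subset_closure ⟨g, rfl⟩
    | zero => exact zero_mem _
    | one => exact one_mem _
    | add a b ha hb h1 h2 => exact add_mem h1 h2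
    | neg a ha h1 => exact neg_mem h1
    | mul a b ha hb h1 h2 => exact mul_mem h1 h2
  have htriv : ∀ z ∈ (⊤ : Subgroup G).lowerCentralSeries c', φ' z = 1 := by
    intro z hz
    have hzA : z ∈ A := hlcs hz
    apply Units.ext
    apply Subtype.ext
    show ((sigma A hA z : R0ˣ) : R0) = 1
    refine AddMonoidHom.ext fun a => ?_
    show Additive.ofMul (cjHom A hA z (Additive.toMul a)) = a
    have h6 : cjHom A hA z (Additive.toMul a) = Additive.toMul a := by
      refine Subtype.ext ?_
      show z * ↑(Additive.toMul a) * z⁻¹ = ↑(Additive.toMul a)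
      have h7 := hcomm z ↑(Additive.toMul a) hzA (Additive.toMul a).2
      rw [h7]
      group
    rw [h6]
    rfl
  have heng' : ∀ i, (((φ' (xs i) : (↥S)ˣ) : ↥S) - 1) ^ n = 0 := by
    intro i
    apply Subtype.ext
    have h8 : (((((φ' (xs i) : (↥S)ˣ) : ↥S) - 1) ^ n : ↥S) : R0)
        = ((((φ' (xs i) : (↥S)ˣ) : ↥S) : R0) - 1) ^ n := by
      push_cast
      rfl
    rw [h8, hφ'val, hEng i]
    rfl
  have hRPres := hRP (↥S) G φ' xs hgen hring htriv heng'
  set TL : G → R0 := fun g => ((sigma A hA g : R0ˣ) : R0) - 1 with hTL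
  have hProdR : ∀ l : List (Fin m), l.length = N →
      (l.map fun i => TL (xs i)).prod = 0 := by
    intro l hl
    have h0 := hRPres l hl
    have h1 : S.subtype ((l.map fun i => (((φ' (xs i) : (↥S)ˣ) : ↥S) - 1)).prod) = 0 := by
      rw [h0, map_zero]
    rw [map_list_prod, List.map_map] at h1
    have h2 : (List.map (⇑S.subtype ∘ fun i => (((φ' (xs i) : (↥S)ˣ) : ↥S) - 1)) l)
        = List.map (fun i => TL (xs i)) l := by
      refine List.map_congr_left fun i _ => ?_
      rfl
    rw [h2] at h1
    exact h1
  -- the descending chain of submodules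
  set Mo : ℕ → AddSubgroup (Additive ↥A) := fun j => AddSubgroup.closure
    {z | ∃ gl : List G, gl.length = j ∧ ∃ a : Additive ↥A, z = ((gl.map TL).prod) a} with hMo
  have hMo0 : ∀ z : Additive ↥A, z ∈ Mo 0 := by
    intro z
    refine AddSubgroup.subset_closure ⟨[], rfl, z, ?_⟩
    show z = (1 : R0) z
    rfl
  have hop : ∀ (g : G) (gl : List G),
      ((sigma A hA g : R0ˣ) : R0) * (gl.map TL).prod
        = ((gl.map fun h => g * h * g⁻¹).map TL).prod * ((sigma A hA g : R0ˣ) : R0) := by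
    intro g gl
    induction gl with
    | nil => simp
    | cons h gl ih =>
      rw [List.map_cons, List.prod_cons, List.map_cons, List.map_cons, List.prod_cons]
      have hsw : ((sigma A hA g : R0ˣ) : R0) * TL h
          = TL (g * h * g⁻¹) * ((sigma A hA g : R0ˣ) : R0) := by
        simp only [hTL]
        rw [mul_sub, sub_mul, mul_one, one_mul]
        congr 1
        rw [← Units.val_mul, ← map_mul, ← Units.val_mul, ← map_mul]
        congr 2
        group
      rw [← mul_assoc, hsw, mul_assoc, ih, ← mul_assoc]
  have hMinv : ∀ j (g : G), ∀ z ∈ Mo j, ((sigma A hA g : R0ˣ) : R0) z ∈ Mo j := by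
    intro j g z hz
    induction hz using AddSubgroup.closure_induction with
    | mem z1 hz1 =>
      obtain ⟨gl, hlen, a, rfl⟩ := hz1
      have h1 : ((sigma A hA g : R0ˣ) : R0) ((gl.map TL).prod a)
          = ((gl.map fun h => g * h * g⁻¹).map TL).prod (((sigma A hA g : R0ˣ) : R0) a) :=
        congrArg (fun f : R0 => f a) (hop g gl)
      rw [h1]
      exact AddSubgroup.subset_closure ⟨gl.map fun h => g * h * g⁻¹, by simp [hlen], _, rfl⟩
    | zero => rw [map_zero]; exact zero_mem _
    | add z1 z2 _ _ h1 h2 => rw [map_add]; exact add_mem h1 h2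
    | neg z1 _ h1 => rw [map_neg]; exact neg_mem h1
  have hMstep : ∀ j (g : G), ∀ z ∈ Mo j, TL g z ∈ Mo (j + 1) := by
    intro j g z hz
    induction hz using AddSubgroup.closure_induction with
    | mem z1 hz1 =>
      obtain ⟨gl, hlen, a, rfl⟩ := hz1
      refine AddSubgroup.subset_closure ⟨g :: gl, by simp [hlen], a, ?_⟩
      rw [List.map_cons, List.prod_cons]
      rfl
    | zero => rw [map_zero]; exact zero_mem _
    | add z1 z2 _ _ h1 h2 => rw [map_add]; exact add_mem h1 h2
    | neg z1 _ h1 => rw [map_neg]; exact neg_mem h1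
  set U : ℕ → AddSubgroup (Additive ↥A) := fun j => AddSubgroup.closure
    {z | ∃ il : List (Fin m), il.length = j ∧ ∃ a : Additive ↥A,
      z = ((il.map fun i => TL (xs i)).prod) a} with hU
  have hUstep : ∀ j (i : Fin m), ∀ z ∈ U j, TL (xs i) z ∈ U (j + 1) := by
    intro j i z hz
    induction hz using AddSubgroup.closure_induction with
    | mem z1 hz1 =>
      obtain ⟨il, hlen, a, rfl⟩ := hz1
      refine AddSubgroup.subset_closure ⟨i :: il, by simp [hlen], a, ?_⟩
      rw [List.map_cons, List.prod_cons]
      rfl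
    | zero => rw [map_zero]; exact zero_mem _
    | add z1 z2 _ _ h1 h2 => rw [map_add]; exact add_mem h1 h2
    | neg z1 _ h1 => rw [map_neg]; exact neg_mem h1
  have hLemR : ∀ j, (∀ z ∈ Mo j, z ∈ U j) → ∀ g : G, ∀ b ∈ Mo j, TL g b ∈ U (j + 1) := by
    intro j hle g
    have hg : g ∈ Subgroup.closure (Set.range xs) := by rw [hgen]; exact Subgroup.mem_top g
    induction hg using Subgroup.closure_induction with
    | mem x hx =>
      obtain ⟨i, rfl⟩ := hx
      intro b hb
      exact hUstep j i b (hle b hb)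
    | one =>
      intro b hb
      have h1 : TL (1 : G) = 0 := by
        simp only [hTL]; rw [map_one, Units.val_one, sub_self]
      rw [h1]
      show (0 : R0) b ∈ _
      rw [AddMonoid.End.zero_apply]
      exact zero_mem _
    | mul g1 g2 _ _ h1 h2 =>
      intro b hb
      have hid : TL (g1 * g2) = TL g1 * ((sigma A hA g2 : R0ˣ) : R0) + TL g2 := by
        simp only [hTL]
        rw [map_mul, Units.val_mul, sub_mul, one_mul]
        abel
      rw [hid]
      have happ : (TL g1 * ((sigma A hA g2 : R0ˣ) : R0) + TL g2) b
          = TL g1 (((sigma A hA g2 : R0ˣ) : R0) b) + TL g2 b := rfl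
      rw [happ]
      exact add_mem (h1 _ (hMinv j g2 b hb)) (h2 b hb)
    | inv g1 _ h1 =>
      intro b hb
      have hv1 : ((sigma A hA g1 : R0ˣ) : R0) * ((sigma A hA g1⁻¹ : R0ˣ) : R0) = 1 := by
        rw [← Units.val_mul, ← map_mul, mul_inv_cancel, map_one, Units.val_one]
      have hid : TL g1⁻¹ = -(TL g1 * ((sigma A hA g1⁻¹ : R0ˣ) : R0)) := by
        simp only [hTL]
        rw [sub_mul, one_mul, hv1]
        abel
      rw [hid]
      have happ : (-(TL g1 * ((sigma A hA g1⁻¹ : R0ˣ) : R0))) b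
          = -(TL g1 (((sigma A hA g1⁻¹ : R0ˣ) : R0) b)) := rfl
      rw [happ]
      exact neg_mem (h1 _ (hMinv j g1⁻¹ b hb))
  have hMleU : ∀ j, ∀ z ∈ Mo j, z ∈ U j := by
    intro j
    induction j with
    | zero =>
      intro z hz
      refine AddSubgroup.subset_closure ⟨[], rfl, z, ?_⟩
      show z = (1 : R0) z
      rfl
    | succ j ihj =>
      intro z hz
      induction hz using AddSubgroup.closure_induction with
      | mem z1 hz1 =>
        obtain ⟨gl, hlen, a, rfl⟩ := hz1
        rcases gl with _ | ⟨g, gl⟩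
        · simp at hlen
        · have hbmem : ((gl.map TL).prod) a ∈ Mo j :=
            AddSubgroup.subset_closure ⟨gl, by simpa using hlen, a, rfl⟩
          have h1 : ((g :: gl).map TL).prod a = TL g (((gl.map TL).prod) a) := by
            rw [List.map_cons, List.prod_cons]
            rfl
          rw [h1]
          exact hLemR j ihj g _ hbmem
      | zero => exact zero_mem _
      | add a b _ _ h1 h2 => exact add_mem h1 h2
      | neg a _ h1 => exact neg_mem h1
  have hUN : ∀ z ∈ U N, z = 0 := by
    intro z hz
    induction hz using AddSubgroup.closure_induction with
    | mem z1 hz1 =>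
      obtain ⟨il, hlen, a, rfl⟩ := hz1
      rw [hProdR il hlen]
      rfl
    | zero => rfl
    | add a b _ _ h1 h2 => rw [h1, h2, add_zero]
    | neg a _ h1 => rw [h1, neg_zero]
  -- relate to the lower central series
  have hchain : ∀ j, (⊤ : Subgroup G).lowerCentralSeries (c' + j) ≤
      Subgroup.map A.subtype (AddSubgroup.toSubgroup' (Mo j)) := by
    intro j
    induction j with
    | zero =>
      intro x hx
      have hxA : x ∈ A := hlcs hx
      exact Subgroup.mem_map.mpr ⟨⟨x, hxA⟩, hMo0 _, rfl⟩
    | succ j ihj =>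
      have hst : (⊤ : Subgroup G).lowerCentralSeries (c' + (j + 1))
          = ⁅(⊤ : Subgroup G).lowerCentralSeries (c' + j), (⊤ : Subgroup G)⁆ := rfl
      rw [hst, Subgroup.commutator_le]
      intro p hp q _
      obtain ⟨bb, hbb, rfl⟩ := Subgroup.mem_map.mp (ihj hp)
      have hmem : Additive.ofMul bb ∈ Mo j := hbb
      have hzmem : Additive.ofMul bb - ((sigma A hA q : R0ˣ) : R0) (Additive.ofMul bb)
          ∈ Mo (j + 1) := by
        have h1 : Additive.ofMul bb - ((sigma A hA q : R0ˣ) : R0) (Additive.ofMul bb)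
            = -(TL q (Additive.ofMul bb)) := by
          have h2 : TL q (Additive.ofMul bb)
              = ((sigma A hA q : R0ˣ) : R0) (Additive.ofMul bb) - Additive.ofMul bb := by
            simp only [hTL]
            rfl
          rw [h2]
          abel
        rw [h1]
        exact neg_mem (hMstep j q _ hmem)
      have hcommut : ⁅A.subtype bb, q⁆
          = A.subtype (Additive.toMul (Additive.ofMul bb
              - ((sigma A hA q : R0ˣ) : R0) (Additive.ofMul bb))) := by
        show ⁅(bb : G), q⁆ = _
        have hv : (A.subtype (Additive.toMul (Additive.ofMul bb
            - ((sigma A hA q : R0ˣ) : R0) (Additive.ofMul bb))) : G)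
            = (bb : G) * (q * (bb : G) * q⁻¹)⁻¹ := by
          rw [sub_eq_add_neg]
          rfl
        rw [hv]
        group
      rw [hcommut]
      exact Subgroup.mem_map.mpr ⟨_, hzmem, rfl⟩
  rw [eq_bot_iff]
  intro x hx
  obtain ⟨bb, hbb, rfl⟩ := Subgroup.mem_map.mp (hchain N hx)
  have h1 : Additive.ofMul bb = 0 := hUN _ (hMleU N _ hbb)
  have h2 : bb = 1 := h1
  rw [h2]
  simpa using Subgroup.mem_bot.mpr (map_one A.subtype)

end KeyLemma
section TopLevel

universe u

lemma map_engel {G H : Type*} [Group G] [Group H] (f : G →* H) (y x : G) :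
    ∀ k, f (engel y x k) = engel (f y) (f x) k := by
  intro k
  induction k with
  | zero => rfl
  | succ k ih =>
    show f ⁅engel y x k, x⁆ = ⁅engel (f y) (f x) k, f x⁆
    rw [map_commutatorElement, ih]

lemma map_lcs_le {G H : Type*} [Group G] [Group H] (f : G →* H) :
    ∀ k, Subgroup.map f ((⊤ : Subgroup G).lowerCentralSeries k) ≤ (⊤ : Subgroup H).lowerCentralSeries k := by
  intro k
  induction k with
  | zero => exact le_top
  | succ k ih =>
    show Subgroup.map f ⁅(⊤ : Subgroup G).lowerCentralSeries k, ⊤⁆ ≤ ⁅(⊤ : Subgroup H).lowerCentralSeries k, ⊤⁆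
    rw [Subgroup.map_commutator]
    exact Subgroup.commutator_mono ih le_top

theorem mainThm (d m n : ℕ) (hn : 0 < n) :
    ∃ c : ℕ, 0 < c ∧
      ∀ (G : Type u) [Group G], derivedSeries G d = ⊥ →
        ∀ xs : Fin m → G, Subgroup.closure (Set.range xs) = ⊤ →
          (∀ i, IsNEngel n (xs i)) →
          (⊤ : Subgroup G).lowerCentralSeries c = ⊥ := by
  induction d with
  | zero =>
    refine ⟨1, Nat.one_pos, ?_⟩
    intro G _ hder xs hgen heng
    have htriv : ∀ x : G, x = 1 := by
      intro x
      have h1 : x ∈ (⊥ : Subgroup G) := hder ▸ Subgroup.mem_top x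
      exact Subgroup.mem_bot.mp h1
    rw [eq_bot_iff]
    intro x _
    exact Subgroup.mem_bot.mpr (htriv x)
  | succ d IH =>
    obtain ⟨c', hc', hIH⟩ := IH
    obtain ⟨N, hN, hKey⟩ := keyLemma.{u} c' m n hn
    refine ⟨c' + N, by omega, ?_⟩
    intro G _ hder xs hgen heng
    set A : Subgroup G := derivedSeries G d with hAdef
    haveI hA : A.Normal := by rw [hAdef]; exact derivedSeries_normal G d
    have hab : ⁅A, A⁆ = ⊥ := by rw [hAdef, ← derivedSeries_succ]; exact hder
    set π := QuotientGroup.mk' A with hπ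
    have hsurj : Function.Surjective ⇑π := QuotientGroup.mk'_surjective A
    have hderQ : derivedSeries (G ⧸ A) d = ⊥ := by
      rw [← map_derivedSeries_eq hsurj d, Subgroup.map_eq_bot_iff, QuotientGroup.ker_mk',
        hAdef]
    have hgenQ : Subgroup.closure (Set.range fun i => π (xs i)) = ⊤ := by
      have h1 : Set.range (fun i => π (xs i)) = ⇑π '' Set.range xs := by
        rw [← Set.range_comp]; rfl
      rw [h1, ← MonoidHom.map_closure, hgen]
      exact Subgroup.map_top_of_surjective π hsurj
    have hengQ : ∀ i, IsNEngel n (π (xs i)) := by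
      intro i yq
      obtain ⟨y, rfl⟩ := hsurj yq
      rw [← map_engel, heng i y]
      exact map_one π
    have hlcsQ := hIH (G ⧸ A) hderQ (fun i => π (xs i)) hgenQ hengQ
    have hlcsG : (⊤ : Subgroup G).lowerCentralSeries c' ≤ A := by
      have h1 : Subgroup.map π ((⊤ : Subgroup G).lowerCentralSeries c') ≤ ⊥ := by
        rw [← hlcsQ]; exact map_lcs_le π c'
      have h2 : Subgroup.map π ((⊤ : Subgroup G).lowerCentralSeries c') = ⊥ := le_bot_iff.mp h1
      rw [Subgroup.map_eq_bot_iff, QuotientGroup.ker_mk'] at h2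
      exact h2
    exact hKey G xs A hA hgen heng hab hlcsG

end TopLevel


/-- For all positive `d, m, n` there is a positive `c = c(d,m,n)` such
that every soluble group of derived length at most `d` generated by `m` elements,
each `n`-Engel, is nilpotent of class at most `c`. -/
theorem statement3 (d m n : ℕ) (hd : 0 < d) (hm : 0 < m) (hn : 0 < n) :
    ∃ c : ℕ, 0 < c ∧
      ∀ (G : Type*) [Group G], derivedSeries G d = ⊥ →
        ∀ xs : Fin m → G, Subgroup.closure (Set.range xs) = ⊤ →
          (∀ i, IsNEngel n (xs i)) →
          (⊤ : Subgroup G).lowerCentralSeries c = ⊥ := by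
  obtain ⟨c, hc, h⟩ := mainThm d m n hn
  exact ⟨c, hc, fun G _ hder xs hgen heng => h G hder xs hgen heng⟩
end ListHelpers
end

section
/- For every multilinear commutator word w and all positive integers k, m there exists a positive integer r (depending only on k and m) with the following property: if G is a soluble group of derived length at most k having subgroups G₁, …, G_m whose union contains all w-values in G, then every element of the verbal subgroup w(G) can be written as a product of at most r elements each belonging to one of the subgroups G₁, …, G_m. -/
open scoped commutatorElement

namespace Statement7Aux

variable {G : Type*} [Group G]

/-! ### Commutator identities -/

lemma idI1 (a b c : G) : ⁅a * b, c⁆ = (a * ⁅b, c⁆ * a⁻¹) * ⁅a, c⁆ := by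
  simp only [commutatorElement_def]; group

lemma idI2 (a b c : G) : ⁅a, b * c⁆ = ⁅a, b⁆ * (b * ⁅a, c⁆ * b⁻¹) := by
  simp only [commutatorElement_def]
  group

lemma idInvL (a c : G) : ⁅a⁻¹, c⁆ = a⁻¹ * ⁅a, c⁆⁻¹ * a := by
  simp only [commutatorElement_def]; group

lemma idInvR (a c : G) : ⁅a, c⁻¹⁆ = c⁻¹ * ⁅a, c⁆⁻¹ * c := by
  simp only [commutatorElement_def]; group

/-! ### Basic eval lemmas -/

lemma eval_comm' {a b : ℕ} (u : MCWord a) (v : MCWord b) (f : Fin (a + b) → G) :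
    (MCWord.comm u v).eval f =
      ⁅u.eval (fun i => f (Fin.castAdd b i)), v.eval (fun i => f (Fin.natAdd a i))⁆ := rfl

lemma eval_conj {q : ℕ} (w : MCWord q) (f : Fin q → G) (g : G) :
    w.eval (fun i => g * f i * g⁻¹) = g * w.eval f * g⁻¹ := by
  induction w with
  | var => rfl
  | comm u v ihu ihv =>
    show ⁅u.eval _, v.eval _⁆ = _
    rw [show (fun i => (fun i => g * f i * g⁻¹) (Fin.castAdd _ i))
        = (fun i => g * (fun i => f (Fin.castAdd _ i)) i * g⁻¹) from rfl, ihu]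
    rw [show (fun i => (fun i => g * f i * g⁻¹) (Fin.natAdd _ i))
        = (fun i => g * (fun i => f (Fin.natAdd _ i)) i * g⁻¹) from rfl, ihv]
    rw [eval_comm']
    simp only [commutatorElement_def]; group

lemma commutator_mem_left {N : Subgroup G} (hN : N.Normal) {a : G} (b : G) (ha : a ∈ N) :
    ⁅a, b⁆ ∈ N := by
  have : ⁅a, b⁆ = a * (b * a⁻¹ * b⁻¹) := by simp only [commutatorElement_def]; group
  rw [this]
  exact N.mul_mem ha (hN.conj_mem _ (N.inv_mem ha) b)

lemma commutator_mem_right {N : Subgroup G} (hN : N.Normal) (a : G) {b : G} (hb : b ∈ N) :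
    ⁅a, b⁆ ∈ N := by
  have : ⁅a, b⁆ = (a * b * a⁻¹) * b⁻¹ := by simp only [commutatorElement_def]
  rw [this]
  exact N.mul_mem (hN.conj_mem _ hb a) (N.inv_mem hb)

lemma fin_addCases_exists {a b : ℕ} (i : Fin (a + b)) :
    (∃ j : Fin a, i = Fin.castAdd b j) ∨ (∃ j : Fin b, i = Fin.natAdd a j) := by
  rcases lt_or_ge (i : ℕ) a with h | h
  · exact Or.inl ⟨⟨i, h⟩, by ext; simp⟩
  · refine Or.inr ⟨⟨(i : ℕ) - a, by omega⟩, by ext; simp; omega⟩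

/-- A `w`-value with one entry in a normal subgroup lies in that subgroup. -/
lemma eval_mem_of_entry {q : ℕ} (w : MCWord q) (f : Fin q → G) {N : Subgroup G}
    (hN : N.Normal) (i : Fin q) (hf : f i ∈ N) : w.eval f ∈ N := by
  induction w with
  | var =>
    have : i = 0 := Subsingleton.elim _ _
    subst this; exact hf
  | comm u v ihu ihv =>
    rw [eval_comm']
    rcases fin_addCases_exists i with ⟨j, rfl⟩ | ⟨j, rfl⟩
    · exact commutator_mem_left hN _ (ihu _ j hf)
    · exact commutator_mem_right hN _ (ihv _ j hf)

lemma castAdd_ne_natAdd {a b : ℕ} (x : Fin a) (y : Fin b) :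
    Fin.castAdd b x ≠ Fin.natAdd a y := by
  intro h
  have := congrArg (Fin.val) h
  simp at this
  omega

/-- A `w`-value with two distinct entries in `derivedSeries G n` lies in
`derivedSeries G (n+1)`. -/
lemma eval_mem_of_two_entries {q : ℕ} (w : MCWord q) (f : Fin q → G) (n : ℕ)
    {i j : Fin q} (hij : i ≠ j) (hi : f i ∈ derivedSeries G n) (hj : f j ∈ derivedSeries G n) :
    w.eval f ∈ derivedSeries G (n + 1) := by
  induction w with
  | var => exact absurd (Subsingleton.elim i j) hij
  | comm u v ihu ihv =>
    rw [eval_comm']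
    rcases fin_addCases_exists i with ⟨i', rfl⟩ | ⟨i', rfl⟩ <;>
      rcases fin_addCases_exists j with ⟨j', rfl⟩ | ⟨j', rfl⟩
    · refine commutator_mem_left (derivedSeries_normal G (n+1)) _ (ihu _ ?_ hi hj)
      intro h; exact hij (by rw [h])
    · rw [derivedSeries_succ]
      exact Subgroup.commutator_mem_commutator
        (eval_mem_of_entry u _ (derivedSeries_normal G n) i' hi)
        (eval_mem_of_entry v _ (derivedSeries_normal G n) j' hj)
    · rw [derivedSeries_succ]
      exact Subgroup.commutator_mem_commutator
        (eval_mem_of_entry u _ (derivedSeries_normal G n) j' hj)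
        (eval_mem_of_entry v _ (derivedSeries_normal G n) i' hi)
    · refine commutator_mem_right (derivedSeries_normal G (n+1)) _ (ihv _ ?_ hi hj)
      intro h; exact hij (by rw [h])

/-- Inverse of a `w`-value is a `w`-value, with entry tracking. -/
lemma eval_inv {q : ℕ} (w : MCWord q) (f : Fin q → G) :
    ∃ f' : Fin q → G, w.eval f' = (w.eval f)⁻¹ ∧
      ∀ i, ∃ z : G, f' i = z * f i * z⁻¹ ∨ f' i = z * (f i)⁻¹ * z⁻¹ := by
  induction w with
  | var =>
    refine ⟨fun _ => (f 0)⁻¹, rfl, fun i => ⟨1, Or.inr ?_⟩⟩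
    have : i = 0 := Subsingleton.elim _ _
    subst this; group
  | comm u v ihu ihv =>
    obtain ⟨fu', hu1, hu2⟩ := ihu (fun i => f (Fin.castAdd _ i))
    set p := u.eval (fun i => f (Fin.castAdd _ i)) with hp
    set q' := v.eval (fun i => f (Fin.natAdd _ i)) with hq
    refine ⟨fun i => p * (Fin.addCases (motive := fun _ => G) fu'
        (fun j => f (Fin.natAdd _ j)) i) * p⁻¹, ?_, ?_⟩
    · rw [show (fun i => p * (Fin.addCases (motive := fun _ => G) fu'
            (fun j => f (Fin.natAdd _ j)) i) * p⁻¹)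
          = (fun i => p * ((Fin.addCases (motive := fun _ => G) fu'
            (fun j => f (Fin.natAdd _ j))) i) * p⁻¹) from rfl,
        eval_conj]
      rw [eval_comm']
      rw [show (fun i => Fin.addCases (motive := fun _ => G) fu'
            (fun j => f (Fin.natAdd _ j)) (Fin.castAdd _ i)) = fu' from
          funext fun i => by simp only [Fin.addCases_left]]
      rw [show (fun i => Fin.addCases (motive := fun _ => G) fu'
            (fun j => f (Fin.natAdd _ j)) (Fin.natAdd _ i)) =
          (fun j => f (Fin.natAdd _ j)) from funext fun i => by simp only [Fin.addCases_right]]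
      rw [hu1, eval_comm', ← hp, ← hq]
      simp only [commutatorElement_def]; group
    · intro i
      rcases fin_addCases_exists i with ⟨j, rfl⟩ | ⟨j, rfl⟩
      · obtain ⟨z, hz | hz⟩ := hu2 j
        · exact ⟨p * z, Or.inl (by simp only [Fin.addCases_left, hz]; group)⟩
        · exact ⟨p * z, Or.inr (by simp only [Fin.addCases_left, hz]; group)⟩
      · exact ⟨p, Or.inl (by simp only [Fin.addCases_right])⟩


/-- The set of correction values: `w`-values at tuples that agree with (a conjugate-coset
of) `f` slot-wise modulo `M`, with at least one slot inside its `M`. -/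
def Corr {q : ℕ} (w : MCWord q) (f : Fin q → G) (M : Fin q → Subgroup G) : Set G :=
  {g | ∃ (h : Fin q → G) (j : Fin q), w.eval h = g ∧ h j ∈ M j ∧
        ∀ i, i ≠ j → ∃ z n, n ∈ M i ∧ h i = z * f i * z⁻¹ * n}

lemma closure_normal_of_conj {S : Set G} (hS : ∀ (g : G), ∀ x ∈ S, g * x * g⁻¹ ∈ S) :
    (Subgroup.closure S).Normal := by
  constructor
  intro n hn g
  induction hn using Subgroup.closure_induction with
  | mem x hx => exact Subgroup.subset_closure (hS g x hx)
  | one => simpa using one_mem (Subgroup.closure S)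
  | mul x y _ _ hx hy =>
    have : g * (x * y) * g⁻¹ = (g * x * g⁻¹) * (g * y * g⁻¹) := by group
    rw [this]; exact mul_mem hx hy
  | inv x _ hx =>
    have : g * x⁻¹ * g⁻¹ = (g * x * g⁻¹)⁻¹ := by group
    rw [this]; exact inv_mem hx

lemma corr_closure_normal {q : ℕ} (w : MCWord q) (f : Fin q → G) (M : Fin q → Subgroup G)
    (hM : ∀ i, (M i).Normal) : (Subgroup.closure (Corr w f M)).Normal := by
  refine closure_normal_of_conj ?_
  rintro g x ⟨h, j, rfl, hslot, hcong⟩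
  refine ⟨fun i => g * h i * g⁻¹, j, eval_conj w h g, (hM j).conj_mem _ hslot g, ?_⟩
  intro i hi
  obtain ⟨z, n, hn, he⟩ := hcong i hi
  refine ⟨g * z, g * n * g⁻¹, (hM i).conj_mem _ hn g, ?_⟩
  show g * h i * g⁻¹ = _
  rw [he]; group

theorem ML {q : ℕ} (w : MCWord q) :
    ∀ (f f' : Fin q → G) (M : Fin q → Subgroup G), (∀ i, (M i).Normal) →
      (∀ i, (f i)⁻¹ * f' i ∈ M i) →
      (w.eval f)⁻¹ * w.eval f' ∈ Subgroup.closure (Corr w f M) := by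
  induction w with
  | var =>
    intro f f' M hM hcong
    refine Subgroup.subset_closure ⟨fun _ => (f 0)⁻¹ * f' 0, 0, rfl, hcong 0, ?_⟩
    intro i hi
    exact absurd (Subsingleton.elim i 0) hi
  | @comm a b u v ihu ihv =>
    intro f f' M hM hcong
    set fu : Fin a → G := fun i => f (Fin.castAdd b i) with hfu
    set fv : Fin b → G := fun i => f (Fin.natAdd a i) with hfv
    set fu' : Fin a → G := fun i => f' (Fin.castAdd b i) with hfu'
    set fv' : Fin b → G := fun i => f' (Fin.natAdd a i) with hfv'
    set Mu : Fin a → Subgroup G := fun i => M (Fin.castAdd b i) with hMu'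
    set Mv : Fin b → Subgroup G := fun i => M (Fin.natAdd a i) with hMv'
    set P := u.eval fu with hP
    set Q := v.eval fv with hQ
    set P' := u.eval fu' with hP'
    set Q' := v.eval fv' with hQ'
    set K := Subgroup.closure (Corr (MCWord.comm u v) f M) with hK
    have hKn : K.Normal := corr_closure_normal _ _ _ hM
    have hx : P⁻¹ * P' ∈ Subgroup.closure (Corr u fu Mu) :=
      ihu fu fu' Mu (fun i => hM _) (fun i => hcong _)
    have hy : Q⁻¹ * Q' ∈ Subgroup.closure (Corr v fv Mv) :=
      ihv fv fv' Mv (fun i => hM _) (fun i => hcong _)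
    set x := P⁻¹ * P' with hxdef
    set y := Q⁻¹ * Q' with hydef
    -- Claim 1 : commutators of Corr-u-closure elements with Q' land in K
    have claim1 : ∀ c ∈ Subgroup.closure (Corr u fu Mu), ⁅c, Q'⁆ ∈ K := by
      intro c hc
      induction hc using Subgroup.closure_induction with
      | mem x₀ hx₀ =>
        obtain ⟨hu, j₀, heval, hslot, hcong'⟩ := hx₀
        refine Subgroup.subset_closure ?_
        refine ⟨Fin.addCases (motive := fun _ => G) hu fv', Fin.castAdd b j₀, ?_, ?_, ?_⟩
        · rw [eval_comm']
          rw [show (fun i => Fin.addCases (motive := fun _ => G) hu fv' (Fin.castAdd b i)) = hu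
              from funext fun i => by simp only [Fin.addCases_left]]
          rw [show (fun i => Fin.addCases (motive := fun _ => G) hu fv' (Fin.natAdd a i)) = fv'
              from funext fun i => by simp only [Fin.addCases_right]]
          rw [heval]
        · simpa only [Fin.addCases_left] using hslot
        · intro i hi
          rcases fin_addCases_exists i with ⟨i', rfl⟩ | ⟨i', rfl⟩
          · have hne : i' ≠ j₀ := by
              intro hh; exact hi (by rw [hh])
            obtain ⟨z, n, hn, he⟩ := hcong' i' hne
            exact ⟨z, n, hn, by simpa only [Fin.addCases_left] using he⟩
          · refine ⟨1, (f (Fin.natAdd a i'))⁻¹ * f' (Fin.natAdd a i'), hcong _, ?_⟩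
            simp only [Fin.addCases_right]
            show fv' i' = _
            rw [hfv']; group
      | one => simpa using one_mem K
      | mul x₁ x₂ _ _ h1 h2 =>
        rw [idI1]
        exact mul_mem (hKn.conj_mem _ h2 x₁) h1
      | inv x₀ _ h1 =>
        have : ⁅x₀⁻¹, Q'⁆ = x₀⁻¹ * ⁅x₀, Q'⁆⁻¹ * (x₀⁻¹)⁻¹ := by
          simp only [commutatorElement_def]; group
        rw [this]
        exact hKn.conj_mem _ (inv_mem h1) x₀⁻¹
    -- Claim 2 : commutators of P with Corr-v-closure elements land in K
    have claim2 : ∀ c ∈ Subgroup.closure (Corr v fv Mv), ⁅P, c⁆ ∈ K := by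
      intro c hc
      induction hc using Subgroup.closure_induction with
      | mem y₀ hy₀ =>
        obtain ⟨hv, j₀, heval, hslot, hcong'⟩ := hy₀
        refine Subgroup.subset_closure ?_
        refine ⟨Fin.addCases (motive := fun _ => G) fu hv, Fin.natAdd a j₀, ?_, ?_, ?_⟩
        · rw [eval_comm']
          rw [show (fun i => Fin.addCases (motive := fun _ => G) fu hv (Fin.castAdd b i)) = fu
              from funext fun i => by simp only [Fin.addCases_left]]
          rw [show (fun i => Fin.addCases (motive := fun _ => G) fu hv (Fin.natAdd a i)) = hv
              from funext fun i => by simp only [Fin.addCases_right]]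
          rw [heval]
        · simpa only [Fin.addCases_right] using hslot
        · intro i hi
          rcases fin_addCases_exists i with ⟨i', rfl⟩ | ⟨i', rfl⟩
          · refine ⟨1, 1, one_mem _, ?_⟩
            simp only [Fin.addCases_left]
            show fu i' = _
            rw [hfu]; group
          · have hne : i' ≠ j₀ := by
              intro hh; exact hi (by rw [hh])
            obtain ⟨z, n, hn, he⟩ := hcong' i' hne
            exact ⟨z, n, hn, by simpa only [Fin.addCases_right] using he⟩
      | one => simpa using one_mem K
      | mul y₁ y₂ _ _ h1 h2 =>
        rw [idI2]
        exact mul_mem h1 (hKn.conj_mem _ h2 y₁)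
      | inv y₀ _ h1 =>
        have : ⁅P, y₀⁻¹⁆ = y₀⁻¹ * ⁅P, y₀⁆⁻¹ * (y₀⁻¹)⁻¹ := by
          simp only [commutatorElement_def]; group
        rw [this]
        exact hKn.conj_mem _ (inv_mem h1) y₀⁻¹
    -- assembly
    have hPP : P' = P * x := by rw [hxdef]; group
    have hQQ : Q' = Q * y := by rw [hydef]; group
    have E : (⁅P, Q⁆)⁻¹ * ⁅P', Q'⁆ =
        ((⁅P, Q⁆)⁻¹ * (P * ⁅x, Q'⁆ * P⁻¹) * ((⁅P, Q⁆)⁻¹)⁻¹) * (Q * ⁅P, y⁆ * Q⁻¹) := by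
      rw [hxdef, hydef]
      simp only [commutatorElement_def]; group
    show (⁅P, Q⁆)⁻¹ * ⁅P', Q'⁆ ∈ K
    rw [E]
    exact mul_mem (hKn.conj_mem _ (hKn.conj_mem _ (claim1 x hx) P) (⁅P, Q⁆)⁻¹)
      (hKn.conj_mem _ (claim2 y hy) Q)


/-! ### The descending generating sets -/

variable (G) in
/-- Deep `w`-values: values lying in the `j`-th derived subgroup. -/
def ASet {q : ℕ} (w : MCWord q) (j : ℕ) : Set G :=
  {g | (∃ f : Fin q → G, w.eval f = g) ∧ g ∈ derivedSeries G j}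

variable (G) in
/-- `w`-values with at least one entry in the `j`-th derived subgroup. -/
def BSet {q : ℕ} (w : MCWord q) (j : ℕ) : Set G :=
  {g | ∃ (f : Fin q → G) (i : Fin q), w.eval f = g ∧ f i ∈ derivedSeries G j}

lemma dS_succ_le (j : ℕ) : derivedSeries G (j + 1) ≤ derivedSeries G j := by
  haveI := derivedSeries_normal G j
  rw [derivedSeries_succ]
  exact Subgroup.commutator_le_left _ _

lemma BSet_mem_dS {q : ℕ} {w : MCWord q} {j : ℕ} {g : G} (hg : g ∈ BSet G w j) :
    g ∈ derivedSeries G j := by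
  obtain ⟨f, i, rfl, hf⟩ := hg
  exact eval_mem_of_entry w f (derivedSeries_normal G j) i hf

lemma ASet_inv {q : ℕ} {w : MCWord q} {j : ℕ} {g : G} (hg : g ∈ ASet G w j) :
    g⁻¹ ∈ ASet G w j := by
  obtain ⟨⟨f, rfl⟩, hd⟩ := hg
  obtain ⟨f', hf', -⟩ := eval_inv w f
  exact ⟨⟨f', hf'⟩, inv_mem hd⟩

lemma BSet_inv {q : ℕ} {w : MCWord q} {j : ℕ} {g : G} (hg : g ∈ BSet G w j) :
    g⁻¹ ∈ BSet G w j := by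
  obtain ⟨f, i, rfl, hf⟩ := hg
  obtain ⟨f', hf', htr⟩ := eval_inv w f
  refine ⟨f', i, hf', ?_⟩
  obtain ⟨z, hz | hz⟩ := htr i <;> rw [hz]
  · exact (derivedSeries_normal G j).conj_mem _ hf z
  · exact (derivedSeries_normal G j).conj_mem _ (inv_mem hf) z

lemma ASet_closure_normal {q : ℕ} (w : MCWord q) (j : ℕ) :
    (Subgroup.closure (ASet G w j)).Normal := by
  refine closure_normal_of_conj ?_
  rintro g x ⟨⟨f, rfl⟩, hd⟩
  exact ⟨⟨fun i => g * f i * g⁻¹, eval_conj w f g⟩,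
    (derivedSeries_normal G j).conj_mem _ hd g⟩

lemma BSet_closure_normal {q : ℕ} (w : MCWord q) (j : ℕ) :
    (Subgroup.closure (BSet G w j)).Normal := by
  refine closure_normal_of_conj ?_
  rintro g x ⟨f, i, rfl, hf⟩
  exact ⟨fun i => g * f i * g⁻¹, i, eval_conj w f g,
    (derivedSeries_normal G j).conj_mem _ hf g⟩

/-- Step A: commutators of deep values are generated by entry-deep values. -/
lemma stepA {q : ℕ} (w : MCWord q) (j : ℕ) {x y : G}
    (hx : x ∈ ASet G w j) (hy : y ∈ ASet G w j) :
    ⁅x, y⁆ ∈ Subgroup.closure (BSet G w j) := by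
  obtain ⟨⟨f₀, hf₀⟩, hxd⟩ := hx
  obtain ⟨-, hyd⟩ := hy
  obtain ⟨f₁, h1, -⟩ := eval_inv w f₀
  rw [hf₀] at h1
  set M : Fin q → Subgroup G := fun _ => derivedSeries G j with hM'
  have key := ML w f₁ (fun i => y * f₁ i * y⁻¹) M (fun _ => derivedSeries_normal G j) ?_
  · have e1 : w.eval (fun i => y * f₁ i * y⁻¹) = y * x⁻¹ * y⁻¹ := by
      rw [eval_conj, h1]
    have e2 : (w.eval f₁)⁻¹ * w.eval (fun i => y * f₁ i * y⁻¹) = ⁅x, y⁆ := by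
      rw [h1, e1]; simp only [commutatorElement_def]; group
    rw [e2] at key
    refine Subgroup.closure_mono ?_ key
    rintro g ⟨h, j₀, rfl, hslot, -⟩
    exact ⟨h, j₀, rfl, hslot⟩
  · intro i
    have h2 : (f₁ i)⁻¹ * ((fun i => y * f₁ i * y⁻¹) i) =
        ((f₁ i)⁻¹ * y * ((f₁ i)⁻¹)⁻¹) * y⁻¹ := by group
    rw [h2]
    exact mul_mem ((derivedSeries_normal G j).conj_mem _ hyd _) (inv_mem hyd)

/-- Step B: commutators of entry-deep values are generated by deeper values. -/
lemma stepB {q : ℕ} (w : MCWord q) (j : ℕ) {x y : G}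
    (hx : x ∈ BSet G w j) (hy : y ∈ BSet G w j) :
    ⁅x, y⁆ ∈ Subgroup.closure (ASet G w (j + 1)) := by
  classical
  obtain ⟨f₀, d₀, hf₀, hslot₀⟩ := hx
  have hyN : y ∈ derivedSeries G j := BSet_mem_dS hy
  obtain ⟨f₁, h1, htr⟩ := eval_inv w f₀
  rw [hf₀] at h1
  have hslot₁ : f₁ d₀ ∈ derivedSeries G j := by
    obtain ⟨z, hz | hz⟩ := htr d₀ <;> rw [hz]
    · exact (derivedSeries_normal G j).conj_mem _ hslot₀ z
    · exact (derivedSeries_normal G j).conj_mem _ (inv_mem hslot₀) z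
  set M : Fin q → Subgroup G :=
    fun i => if i = d₀ then derivedSeries G (j + 1) else derivedSeries G j with hM'
  have hMn : ∀ i, (M i).Normal := by
    intro i
    rw [hM']
    by_cases h : i = d₀
    · simpa [h] using derivedSeries_normal G (j+1)
    · simpa [h] using derivedSeries_normal G j
  have key := ML w f₁ (fun i => y * f₁ i * y⁻¹) M hMn ?_
  · have e1 : w.eval (fun i => y * f₁ i * y⁻¹) = y * x⁻¹ * y⁻¹ := by
      rw [eval_conj, h1]
    have e2 : (w.eval f₁)⁻¹ * w.eval (fun i => y * f₁ i * y⁻¹) = ⁅x, y⁆ := by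
      rw [h1, e1]; simp only [commutatorElement_def]; group
    rw [e2] at key
    refine Subgroup.closure_mono ?_ key
    rintro g ⟨h, j₀, rfl, hslot, hcong'⟩
    by_cases hj : j₀ = d₀
    · subst hj
      rw [hM'] at hslot
      simp only [if_pos rfl] at hslot
      exact ⟨⟨h, rfl⟩, eval_mem_of_entry w h (derivedSeries_normal G (j+1)) j₀ hslot⟩
    · rw [hM'] at hslot
      simp only [if_neg hj] at hslot
      obtain ⟨z, n, hn, he⟩ := hcong' d₀ (fun hh => hj hh.symm)
      rw [hM'] at hn
      simp only [if_pos rfl] at hn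
      have hd : h d₀ ∈ derivedSeries G j := by
        rw [he]
        exact mul_mem ((derivedSeries_normal G j).conj_mem _ hslot₁ z) (dS_succ_le j hn)
      exact ⟨⟨h, rfl⟩, eval_mem_of_two_entries w h j hj hslot hd⟩
  · intro i
    by_cases h : i = d₀
    · subst h
      have h2 : (f₁ i)⁻¹ * ((fun i => y * f₁ i * y⁻¹) i) = ⁅(f₁ i)⁻¹, y⁆ := by
        simp only [commutatorElement_def]; group
      rw [h2, hM']
      simp only [if_pos rfl, derivedSeries_succ]
      exact Subgroup.commutator_mem_commutator (inv_mem hslot₁) hyN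
    · have h2 : (f₁ i)⁻¹ * ((fun i => y * f₁ i * y⁻¹) i) =
          ((f₁ i)⁻¹ * y * ((f₁ i)⁻¹)⁻¹) * y⁻¹ := by group
      rw [h2, hM']
      simp only [if_neg h]
      exact mul_mem ((derivedSeries_normal G j).conj_mem _ hyN _) (inv_mem hyN)


/-! ### Collecting into buckets -/

lemma comm_closure_mem {X : Set G} {B : Subgroup G} (hBn : B.Normal)
    (hpair : ∀ x ∈ X, ∀ y ∈ X, ⁅x, y⁆ ∈ B) :
    ∀ x ∈ X, ∀ g ∈ Subgroup.closure X, ⁅x, g⁆ ∈ B := by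
  intro x hx g hg
  induction hg using Subgroup.closure_induction with
  | mem y hy => exact hpair x hx y hy
  | one => simpa using one_mem B
  | mul y z _ _ hy hz => rw [idI2]; exact mul_mem hy (hBn.conj_mem _ hz y)
  | inv y _ hy =>
    have : ⁅x, y⁻¹⁆ = y⁻¹ * ⁅x, y⁆⁻¹ * (y⁻¹)⁻¹ := by
      simp only [commutatorElement_def]; group
    rw [this]; exact hBn.conj_mem _ (inv_mem hy) y⁻¹

lemma exists_list_of_mem_closure_symm {X : Set G} (hsym : ∀ x ∈ X, x⁻¹ ∈ X) {h : G}
    (hh : h ∈ Subgroup.closure X) : ∃ L : List G, (∀ z ∈ L, z ∈ X) ∧ L.prod = h := by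
  have h1 : h ∈ Submonoid.closure (X ∪ X⁻¹) := by
    rw [← Subgroup.closure_toSubmonoid]; exact hh
  have h2 : X ∪ X⁻¹ = X := by
    apply Set.Subset.antisymm
    · rintro z (hz | hz)
      · exact hz
      · simpa using hsym z⁻¹ (Set.mem_inv.mp hz)
    · exact Set.subset_union_left
  rw [h2] at h1
  exact Submonoid.exists_list_of_mem_closure h1

lemma pull {Xf : Set G} {B : Subgroup G} (hBn : B.Normal)
    (hcomm : ∀ x ∈ Xf, ∀ g ∈ Subgroup.closure Xf, ⁅x, g⁆ ∈ B)
    (hsymf : ∀ x ∈ Xf, x⁻¹ ∈ Xf)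
    {X : Set G} (hXf : X ⊆ Xf) (G₀ : Subgroup G) :
    ∀ L : List G, (∀ z ∈ L, z ∈ X) →
      ∃ (g₀ : G) (L' : List G), g₀ ∈ G₀ ∧ g₀ ∈ Subgroup.closure Xf ∧
        (∀ z ∈ L', z ∈ X ∧ z ∉ G₀) ∧ ∃ b ∈ B, L.prod = g₀ * L'.prod * b := by
  intro L
  induction L with
  | nil => exact fun _ => ⟨1, [], one_mem _, one_mem _, by simp, 1, one_mem _, by simp⟩
  | cons xhd L ih =>
    intro hL
    obtain ⟨g₀, L', hg₀, hg₀c, hL', b, hb, hprod⟩ :=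
      ih (fun z hz => hL z (List.mem_cons_of_mem _ hz))
    have hx : xhd ∈ X := hL xhd List.mem_cons_self
    by_cases hxg : xhd ∈ G₀
    · refine ⟨xhd * g₀, L', mul_mem hxg hg₀,
        mul_mem (Subgroup.subset_closure (hXf hx)) hg₀c, hL', b, hb, ?_⟩
      rw [List.prod_cons, hprod]; group
    · have hc : ⁅xhd⁻¹, g₀⁻¹⁆ ∈ B := hcomm _ (hsymf _ (hXf hx)) _ (inv_mem hg₀c)
      refine ⟨g₀, xhd :: L', hg₀, hg₀c, ?_,
        (L'.prod⁻¹ * ⁅xhd⁻¹, g₀⁻¹⁆ * L'.prod) * b, ?_, ?_⟩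
      · intro z hz
        rcases List.mem_cons.mp hz with rfl | hz
        · exact ⟨hx, hxg⟩
        · exact hL' z hz
      · refine mul_mem ?_ hb
        have : L'.prod⁻¹ * ⁅xhd⁻¹, g₀⁻¹⁆ * L'.prod =
            L'.prod⁻¹ * ⁅xhd⁻¹, g₀⁻¹⁆ * (L'.prod⁻¹)⁻¹ := by group
        rw [this]; exact hBn.conj_mem _ hc _
      · rw [List.prod_cons, hprod, List.prod_cons]
        simp only [commutatorElement_def]; group

lemma collect {Xf : Set G} {B : Subgroup G} (hBn : B.Normal)
    (hcomm : ∀ x ∈ Xf, ∀ g ∈ Subgroup.closure Xf, ⁅x, g⁆ ∈ B)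
    (hsymf : ∀ x ∈ Xf, x⁻¹ ∈ Xf) :
    ∀ (m : ℕ) (Gs : Fin m → Subgroup G) (X : Set G), X ⊆ Xf →
      (∀ z ∈ X, ∃ b, z ∈ Gs b) →
      ∀ L : List G, (∀ z ∈ L, z ∈ X) →
        ∃ l : List G, l.length ≤ m ∧ (∀ z ∈ l, ∃ b, z ∈ Gs b) ∧ (l.prod)⁻¹ * L.prod ∈ B := by
  intro m
  induction m with
  | zero =>
    intro Gs X hXf hcov L hL
    match L with
    | [] => exact ⟨[], by simp, by simp, by simpa using one_mem B⟩
    | z :: L =>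
      obtain ⟨b, -⟩ := hcov z (hL z List.mem_cons_self)
      exact b.elim0
  | succ m ih =>
    intro Gs X hXf hcov L hL
    obtain ⟨g₀, L', hg₀, -, hL', b, hb, hprod⟩ := pull hBn hcomm hsymf hXf (Gs 0) L hL
    have hcov' : ∀ z ∈ {z ∈ X | z ∉ Gs 0}, ∃ b, z ∈ (fun b => Gs (Fin.succ b)) b := by
      rintro z ⟨hzX, hz0⟩
      obtain ⟨b', hb'⟩ := hcov z hzX
      rcases Fin.eq_zero_or_eq_succ b' with rfl | ⟨b'', rfl⟩
      · exact absurd hb' hz0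
      · exact ⟨b'', hb'⟩
    obtain ⟨l', hlen, hcover, hmem⟩ := ih (fun b => Gs b.succ) {z ∈ X | z ∉ Gs 0}
      (fun z hz => hXf hz.1) hcov' L' (fun z hz => hL' z hz)
    refine ⟨g₀ :: l', by simpa using Nat.succ_le_succ hlen, ?_, ?_⟩
    · intro z hz
      rcases List.mem_cons.mp hz with rfl | hz
      · exact ⟨0, hg₀⟩
      · obtain ⟨b', hb'⟩ := hcover z hz
        exact ⟨b'.succ, hb'⟩
    · rw [List.prod_cons, hprod]
      have : (g₀ * l'.prod)⁻¹ * (g₀ * L'.prod * b) = ((l'.prod)⁻¹ * L'.prod) * b := by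
        group
      rw [this]; exact mul_mem hmem hb

/-! ### The descent -/

lemma descend {q : ℕ} (w : MCWord q) (k m : ℕ)
    (hder : derivedSeries G k = ⊥) (Gs : Fin m → Subgroup G)
    (hcov : ∀ z : G, (∃ f : Fin q → G, w.eval f = z) → ∃ b, z ∈ Gs b) :
    ∀ (d : ℕ) (j : ℕ), j + d = k → ∀ h ∈ Subgroup.closure (ASet G w j),
      ∃ l : List G, l.length ≤ 2 * d * m ∧ (∀ z ∈ l, ∃ b, z ∈ Gs b) ∧ l.prod = h := by
  intro d
  induction d with
  | zero =>
    intro j hj h hh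
    refine ⟨[], by simp, by simp, ?_⟩
    have hjk : j = k := by omega
    subst hjk
    have hle : Subgroup.closure (ASet G w j) ≤ ⊥ := by
      rw [← hder]
      refine (Subgroup.closure_le _).mpr ?_
      rintro z ⟨-, hz⟩
      exact hz
    simpa using (Subgroup.mem_bot.mp (hle hh)).symm
  | succ d ih =>
    intro j hj h hh
    obtain ⟨L, hLmem, hLprod⟩ := exists_list_of_mem_closure_symm (fun x hx => ASet_inv hx) hh
    obtain ⟨l₁, hl₁len, hl₁cov, hl₁mem⟩ :=
      collect (BSet_closure_normal w j)
        (comm_closure_mem (BSet_closure_normal w j) (fun x hx y hy => stepA w j hx hy))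
        (fun x hx => ASet_inv hx) m Gs (ASet G w j) (le_refl _)
        (fun z hz => hcov z hz.1) L hLmem
    rw [hLprod] at hl₁mem
    obtain ⟨L₂, hL₂mem, hL₂prod⟩ :=
      exists_list_of_mem_closure_symm (fun x hx => BSet_inv hx) hl₁mem
    obtain ⟨l₂, hl₂len, hl₂cov, hl₂mem⟩ :=
      collect (ASet_closure_normal w (j + 1))
        (comm_closure_mem (ASet_closure_normal w (j + 1)) (fun x hx y hy => stepB w j hx hy))
        (fun x hx => BSet_inv hx) m Gs (BSet G w j) (le_refl _)
        (fun z hz => hcov z ⟨hz.choose, hz.choose_spec.choose_spec.1⟩) L₂ hL₂mem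
    rw [hL₂prod] at hl₂mem
    obtain ⟨l₃, hl₃len, hl₃cov, hl₃prod⟩ := ih (j + 1) (by omega) _ hl₂mem
    refine ⟨l₁ ++ l₂ ++ l₃, ?_, ?_, ?_⟩
    · simp only [List.length_append]
      have : 2 * (d + 1) * m = m + m + 2 * d * m := by ring
      omega
    · intro z hz
      simp only [List.mem_append] at hz
      rcases hz with (hz | hz) | hz
      · exact hl₁cov z hz
      · exact hl₂cov z hz
      · exact hl₃cov z hz
    · simp only [List.prod_append]
      rw [hl₃prod]
      group

end Statement7Aux

/-- for every multilinear commutator word `w` and all positive `k, m`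
there is a positive `r = r(k,m)` such that in any soluble group of derived length at
most `k` whose `w`-values are covered by subgroups `G₁,…,G_m`, every element of
`w(G)` is a product of at most `r` elements from the subgroups `G₁,…,G_m`. -/
theorem statement7 (k m : ℕ) (hk : 0 < k) (hm : 0 < m) :
    ∃ r : ℕ, 0 < r ∧
      ∀ {kw : ℕ} (w : MCWord kw) (G : Type*) [Group G],
        derivedSeries G k = ⊥ →
        ∀ Gs : Fin m → Subgroup G, wValues w ⊆ ⋃ i, (Gs i : Set G) →
          ∀ g ∈ Subgroup.closure (wValues w),
            ∃ l : List G, l.length ≤ r ∧ (∀ x ∈ l, ∃ i, x ∈ Gs i) ∧ l.prod = g := by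
  refine ⟨2 * k * m, Nat.mul_pos (Nat.mul_pos (by norm_num) hk) hm, ?_⟩
  intro kw w G _ hder Gs hcovset g hg
  have hcov : ∀ z : G, (∃ f : Fin kw → G, w.eval f = z) → ∃ b, z ∈ Gs b := by
    intro z hz
    rcases Set.mem_iUnion.mp (hcovset hz) with ⟨i, hi⟩
    exact ⟨i, hi⟩
  have hg' : g ∈ Subgroup.closure (Statement7Aux.ASet G w 0) := by
    refine Subgroup.closure_mono ?_ hg
    intro z hz
    exact ⟨hz, by rw [derivedSeries_zero]; exact Subgroup.mem_top z⟩
  exact Statement7Aux.descend w k m hder Gs hcov k 0 (by omega) g hg'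
end
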